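/- arXiv:1012.5718 — 7 statements merged into one kernel-verified Lean document; each statement's English description precedes it below -/
import Mathlib

section
/- Let d ≥ 1 and let Θ : M_d(ℂ) → M_d(ℂ) be a ℂ-linear map such that for every d×d density matrix ρ, the characteristic polynomial of Θ(ρ) equals that of ρ. Suppose moreover that Θ is unital, i.e. Θ(1) = 1 where 1 is the d×d identity matrix. Then for every Hermitian matrix A ∈ M_d(ℂ), the characteristic polynomial of Θ(A) equals the characteristic polynomial of A. -/
open Matrix ComplexOrder

private lemma eval_charpoly_aux {n : ℕ} (M : Matrix (Fin n) (Fin n) ℂ) (x : ℂ) :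
    M.charpoly.eval x = (x • (1 : Matrix (Fin n) (Fin n) ℂ) - M).det := by
  rw [Matrix.charpoly, ← Polynomial.coe_evalRingHom, RingHom.map_det]
  congr 1
  ext i j
  rcases eq_or_ne i j with rfl | h
  · simp [Matrix.charmatrix_apply_eq, Matrix.one_apply]
  · simp [Matrix.charmatrix_apply_ne _ _ _ h, Matrix.one_apply, h]

private lemma charpoly_cancel_aux {n : ℕ} (s u : ℂ) (hs : s ≠ 0)
    (M N : Matrix (Fin n) (Fin n) ℂ)
    (h : (s • (M + u • (1 : Matrix (Fin n) (Fin n) ℂ))).charpoly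
        = (s • (N + u • (1 : Matrix (Fin n) (Fin n) ℂ))).charpoly) :
    M.charpoly = N.charpoly := by
  apply Polynomial.funext
  intro z
  have key := congrArg (Polynomial.eval (s * (z + u))) h
  rw [eval_charpoly_aux, eval_charpoly_aux] at key
  have e : ∀ P : Matrix (Fin n) (Fin n) ℂ,
      (s * (z + u)) • (1 : Matrix (Fin n) (Fin n) ℂ) - s • (P + u • 1)
        = s • (z • (1 : Matrix (Fin n) (Fin n) ℂ) - P) := by
    intro P
    module
  rw [e M, e N, Matrix.det_smul, Matrix.det_smul] at key
  rw [eval_charpoly_aux, eval_charpoly_aux]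
  exact mul_left_cancel₀ (pow_ne_zero _ hs) key

/-- **Lemma L0 of the paper.** A unital ℂ-linear map on `M_d(ℂ)` preserving the
characteristic polynomial of every density matrix preserves the characteristic
polynomial of every Hermitian matrix. -/
theorem stmt_4 (d : ℕ) (hd : 1 ≤ d)
    (Θ : Matrix (Fin d) (Fin d) ℂ →ₗ[ℂ] Matrix (Fin d) (Fin d) ℂ)
    (hΘ : ∀ ρ : Matrix (Fin d) (Fin d) ℂ, ρ.PosSemidef → ρ.trace = 1 →
      (Θ ρ).charpoly = ρ.charpoly)
    (hunital : Θ 1 = 1) :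
    ∀ A : Matrix (Fin d) (Fin d) ℂ, A.IsHermitian →
      (Θ A).charpoly = A.charpoly := by
  intro A hA
  haveI : Nonempty (Fin d) := ⟨⟨0, hd⟩⟩
  set c : ℝ := 1 + ∑ i, |hA.eigenvalues i| with hc
  have hci : ∀ i, 1 ≤ hA.eigenvalues i + c := by
    intro i
    have h1 : |hA.eigenvalues i| ≤ ∑ j, |hA.eigenvalues j| :=
      Finset.single_le_sum (f := fun j => |hA.eigenvalues j|) (fun j _ => abs_nonneg _) (Finset.mem_univ i)
    have h2 : -hA.eigenvalues i ≤ |hA.eigenvalues i| := neg_le_abs _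
    rw [hc]; linarith
  set U : Matrix (Fin d) (Fin d) ℂ := (hA.eigenvectorUnitary : Matrix (Fin d) (Fin d) ℂ) with hU
  have hUU : U * star U = 1 := (Matrix.mem_unitaryGroup_iff).mp hA.eigenvectorUnitary.2
  have hUU' : star U * U = 1 := (Matrix.mem_unitaryGroup_iff').mp hA.eigenvectorUnitary.2
  set D : Matrix (Fin d) (Fin d) ℂ :=
    Matrix.diagonal (fun i => ((hA.eigenvalues i + c : ℝ) : ℂ)) with hD
  have hBD : A + (c : ℂ) • 1 = U * D * star U := by
    have hDeq : D = Matrix.diagonal (RCLike.ofReal ∘ hA.eigenvalues) + (c : ℂ) • 1 := by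
      ext i j
      rcases eq_or_ne i j with rfl | h
      · simp [hD, Matrix.diagonal_apply_eq, Matrix.one_apply]
      · simp [hD, Matrix.diagonal_apply_ne _ h, Matrix.one_apply, h]
    rw [hDeq, Matrix.mul_add, Matrix.add_mul, Matrix.mul_smul, Matrix.smul_mul,
      Matrix.mul_one, hUU]
    nth_rewrite 1 [show A = U * diagonal (RCLike.ofReal ∘ hA.eigenvalues) * star U from hA.spectral_theorem]
    rfl
  have hBpsd : (A + (c : ℂ) • 1).PosSemidef := by
    rw [hBD]
    refine Matrix.PosSemidef.mul_mul_conjTranspose_same ?_ U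
    refine Matrix.posSemidef_diagonal_iff.mpr fun i => ?_
    rw [← Complex.ofReal_zero, Complex.real_le_real]
    linarith [hci i]
  set t : ℝ := ∑ i, (hA.eigenvalues i + c) with ht
  have htpos : 0 < t :=
    Finset.sum_pos (fun i _ => lt_of_lt_of_le one_pos (hci i)) Finset.univ_nonempty
  have htr : (A + (c : ℂ) • 1).trace = (t : ℝ) := by
    rw [hBD, Matrix.trace_mul_cycle, hUU', Matrix.one_mul, hD, Matrix.trace_diagonal]
    push_cast [ht]
    ring
  have htne : ((t : ℂ)) ≠ 0 := by exact_mod_cast htpos.ne'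
  set s : ℂ := (t : ℂ)⁻¹ with hs
  have hsne : s ≠ 0 := inv_ne_zero htne
  have hρpsd : (s • (A + (c : ℂ) • 1)).PosSemidef := by
    constructor
    · have hH : (A + (c : ℂ) • 1).IsHermitian := hBpsd.1
      have hstars : star s = s := by
        rw [hs, ← Complex.ofReal_inv, Complex.star_def, Complex.conj_ofReal]
      rw [Matrix.IsHermitian, Matrix.conjTranspose_smul, hH.eq, hstars]
    · intro x
      have heq : (x.sum fun i xi => x.sum fun j xj => star xi * (s • (A + (c : ℂ) • 1)) i j * xj)
          = s * (x.sum fun i xi => x.sum fun j xj => star xi * (A + (c : ℂ) • 1) i j * xj) := by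
        simp only [Finsupp.sum, Finset.mul_sum, Matrix.smul_apply, smul_eq_mul]
        exact Finset.sum_congr rfl fun i _ => Finset.sum_congr rfl fun j _ => by ring
      rw [heq]
      refine mul_nonneg ?_ (hBpsd.2 x)
      rw [hs, ← Complex.ofReal_inv, ← Complex.ofReal_zero, Complex.real_le_real]
      positivity
  have hρtr : (s • (A + (c : ℂ) • 1)).trace = 1 := by
    rw [Matrix.trace_smul, htr, hs, smul_eq_mul, inv_mul_cancel₀ htne]
  have h1 := hΘ _ hρpsd hρtr
  have hΘρ : Θ (s • (A + (c : ℂ) • 1)) = s • (Θ A + (c : ℂ) • 1) := by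
    rw [LinearMap.map_smul, LinearMap.map_add, LinearMap.map_smul, hunital]
  rw [hΘρ] at h1
  exact charpoly_cancel_aux s (c : ℂ) hsne _ _ h1
end

section
/- Let d ≥ 1 and let Θ : M_d(ℂ) → M_d(ℂ) be a ℂ-linear map such that for every d×d density matrix ρ, the characteristic polynomial of Θ(ρ) equals that of ρ. Then Θ(1) = 1, where 1 is the d×d identity matrix. -/
open Matrix ComplexOrder Polynomial Finset

private lemma pair_inj {α : Type*} [LinearOrder α] {i j k l : α} (hij : i < j) (hkl : k < l)
    (h : ∀ x : α, (x = i ∨ x = j) ↔ (x = k ∨ x = l)) : i = k ∧ j = l := by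
  have hi : i = k ∨ i = l := (h i).mp (Or.inl rfl)
  have hj : j = k ∨ j = l := (h j).mp (Or.inr rfl)
  rcases hi with h1 | h1
  · subst h1
    rcases hj with h2 | h2
    · exact absurd (h2 ▸ hij) (lt_irrefl _)
    · exact ⟨rfl, h2⟩
  · subst h1
    rcases hj with h2 | h2
    · exact absurd (hij.trans (lt_of_eq_of_lt h2 hkl)) (lt_irrefl _)
    · exact absurd (lt_of_lt_of_eq hij h2) (lt_irrefl _)

variable {d : ℕ}

private def Pset (d : ℕ) : Finset (Fin d × Fin d) :=
  Finset.univ.filter (fun p => p.1 < p.2)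

private abbrev pairF {d : ℕ} (p : Fin d × Fin d) : Finset (Fin d) := {p.1, p.2}

private lemma charpoly_coeff_sub_two (hd : 2 ≤ d) (M : Matrix (Fin d) (Fin d) ℂ) :
    M.charpoly.coeff (d - 2) =
      ∑ p ∈ Pset d, (M p.1 p.1 * M p.2 p.2 - M p.1 p.2 * M p.2 p.1) := by
  have hcard : (Finset.univ : Finset (Fin d)).card = d := by simp
  rw [Matrix.charpoly, Matrix.det_apply, Polynomial.finset_sum_coeff]
  simp only [Polynomial.coeff_smul]
  set F : Equiv.Perm (Fin d) → ℂ :=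
    fun σ => Equiv.Perm.sign σ • (∏ i, M.charmatrix (σ i) i).coeff (d - 2) with hF
  show ∑ σ : Equiv.Perm (Fin d), F σ = _
  set T : Finset (Equiv.Perm (Fin d)) :=
    insert 1 ((Pset d).image fun p => Equiv.swap p.1 p.2) with hT
  have hvanish : ∀ σ, σ ∉ T → F σ = 0 := by
    intro σ hσ
    simp only [hT, Finset.mem_insert, Finset.mem_image, not_or, not_exists] at hσ
    obtain ⟨h1, h2⟩ := hσ
    have hsupd : σ.support.card ≤ d := by simpa using Finset.card_le_univ σ.support
    have hsc : 3 ≤ σ.support.card := by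
      rcases Nat.lt_or_ge σ.support.card 3 with h | h
      · exfalso
        interval_cases h' : σ.support.card
        · exact h1 (Equiv.Perm.card_support_eq_zero.mp h')
        · exact Equiv.Perm.card_support_ne_one σ h'
        · obtain ⟨x, y, hxy, rfl⟩ := Equiv.Perm.card_support_eq_two.mp h'
          rcases hxy.lt_or_gt with hlt | hlt
          · exact h2 (x, y) ⟨by simp [Pset, hlt], rfl⟩
          · exact h2 (y, x) ⟨by simp [Pset, hlt], Equiv.swap_comm y x⟩
      · exact h
    have hdeg : (∏ i, M.charmatrix (σ i) i).natDegree < d - 2 := by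
      have hle : (∏ i, M.charmatrix (σ i) i).natDegree ≤
          ∑ i, (M.charmatrix (σ i) i).natDegree := Polynomial.natDegree_prod_le _ _
      have hb : ∀ i : Fin d, (M.charmatrix (σ i) i).natDegree ≤
          if σ i = i then 1 else 0 := by
        intro i
        by_cases h : σ i = i
        · simp only [h, if_pos rfl, Matrix.charmatrix_apply_eq]
          exact (Polynomial.natDegree_X_sub_C _).le
        · simp only [if_neg h, Matrix.charmatrix_apply_ne M _ _ h]
          simp
      have hsum : ∑ i, (M.charmatrix (σ i) i).natDegree ≤
          ∑ i : Fin d, (if σ i = i then 1 else 0) := Finset.sum_le_sum fun i _ => hb i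
      have hsplit : (Finset.univ.filter (fun i => σ i = i)).card
          + (Finset.univ.filter (fun i => ¬ σ i = i)).card = d := by
        rw [Finset.card_filter_add_card_filter_not]; exact hcard
      have hsupp : (Finset.univ.filter (fun i => ¬ σ i = i)) = σ.support := by
        ext i; simp [Equiv.Perm.mem_support]
      rw [hsupp] at hsplit
      have hfix : ∑ i : Fin d, (if σ i = i then 1 else 0)
          = (Finset.univ.filter (fun i => σ i = i)).card := by
        rw [← Finset.card_filter]
      omega
    rw [hF]
    simp [Polynomial.coeff_eq_zero_of_natDegree_lt hdeg]
  rw [← Finset.sum_subset (Finset.subset_univ T) (fun σ _ h => hvanish σ h)]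
  have hone : (1 : Equiv.Perm (Fin d)) ∉ (Pset d).image fun p => Equiv.swap p.1 p.2 := by
    simp only [Finset.mem_image, not_exists]
    rintro ⟨i, j⟩ ⟨hij, hsw⟩
    simp only [Pset, Finset.mem_filter] at hij
    have hji : j = i := by rw [← Equiv.swap_apply_left i j, hsw]; rfl
    exact absurd hji hij.2.ne'
  rw [hT, Finset.sum_insert hone, Finset.sum_image ?hinj]
  case hinj =>
    rintro ⟨i, j⟩ hp ⟨k, l⟩ hq h
    simp only [Finset.mem_coe, Pset, Finset.mem_filter] at hp hq
    have hs := congrArg Equiv.Perm.support h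
    rw [Equiv.Perm.support_swap hp.2.ne, Equiv.Perm.support_swap hq.2.ne] at hs
    have hmem : ∀ x : Fin d, (x = i ∨ x = j) ↔ (x = k ∨ x = l) := by
      intro x; have h' := Finset.ext_iff.mp hs x; simpa using h'
    obtain ⟨h1, h2⟩ := pair_inj hp.2 hq.2 hmem
    simp [Prod.ext_iff, h1, h2]
  -- main computation
  have hid : F 1 = ∑ p ∈ Pset d, M p.1 p.1 * M p.2 p.2 := by
    have hprod1 : (∏ i, M.charmatrix ((1 : Equiv.Perm (Fin d)) i) i)
        = ∏ i : Fin d, (X + C (-(M i i))) := by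
      refine Finset.prod_congr rfl fun i _ => ?_
      simp [Matrix.charmatrix_apply_eq, sub_eq_add_neg]
    rw [hF]
    simp only [Equiv.Perm.sign_one, one_smul, hprod1]
    rw [Finset.prod_X_add_C_coeff _ _
      (by rw [hcard]; omega : d - 2 ≤ (Finset.univ : Finset (Fin d)).card)]
    rw [hcard]
    have h2' : d - (d - 2) = 2 := by omega
    rw [h2']
    refine (Finset.sum_bij (fun p _ => pairF p) ?_ ?_ ?_ ?_).symm
    · rintro ⟨i, j⟩ hp
      simp only [Pset, Finset.mem_filter] at hp
      rw [Finset.mem_powersetCard]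
      refine ⟨Finset.subset_univ _, ?_⟩
      show (pairF (i, j)).card = 2
      rw [show pairF (i,j) = {i,j} from rfl, Finset.card_insert_of_notMem (by simp [hp.2.ne]), Finset.card_singleton]
    · rintro ⟨i, j⟩ hp ⟨k, l⟩ hq h
      simp only [Pset, Finset.mem_filter] at hp hq
      have hmem : ∀ x : Fin d, (x = i ∨ x = j) ↔ (x = k ∨ x = l) := by
        intro x; have h' := Finset.ext_iff.mp h x; simpa [pairF] using h'
      obtain ⟨h1, h2⟩ := pair_inj hp.2 hq.2 hmem
      simp [Prod.ext_iff, h1, h2]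
    · intro t ht
      rw [Finset.mem_powersetCard] at ht
      obtain ⟨a, b, hab, rfl⟩ := Finset.card_eq_two.mp ht.2
      rcases hab.lt_or_gt with hlt | hlt
      · exact ⟨(a, b), by simp [Pset, hlt], rfl⟩
      · exact ⟨(b, a), by simp [Pset, hlt], by show pairF (b,a) = {a,b}; rw [show pairF (b,a) = {b,a} from rfl, Finset.pair_comm]⟩
    · rintro ⟨i, j⟩ hp
      simp only [Pset, Finset.mem_filter] at hp
      show _ = ∏ k ∈ pairF (i, j), _
      rw [show pairF (i,j) = {i,j} from rfl, Finset.prod_pair hp.2.ne]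
      ring
  have hswp : ∀ p ∈ Pset d, F (Equiv.swap p.1 p.2) = -(M p.1 p.2 * M p.2 p.1) := by
    rintro ⟨i, j⟩ hp
    simp only [Pset, Finset.mem_filter] at hp
    have hij : i ≠ j := hp.2.ne
    have hsub : ({i, j} : Finset (Fin d)) ⊆ Finset.univ := Finset.subset_univ _
    have hprod : (∏ k, M.charmatrix ((Equiv.swap i j) k) k)
        = (∏ k ∈ Finset.univ \ {i, j}, (X + C (-(M k k))))
          * (C (M i j * M j i)) := by
      rw [← Finset.prod_sdiff hsub]
      congr 1
      · refine Finset.prod_congr rfl fun k hk => ?_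
        simp only [Finset.mem_sdiff, Finset.mem_insert, Finset.mem_singleton, not_or] at hk
        rw [Equiv.swap_apply_of_ne_of_ne hk.2.1 hk.2.2, Matrix.charmatrix_apply_eq,
          sub_eq_add_neg, map_neg]
      · rw [Finset.prod_pair hij, Equiv.swap_apply_left, Equiv.swap_apply_right,
          Matrix.charmatrix_apply_ne M _ _ (Ne.symm hij),
          Matrix.charmatrix_apply_ne M _ _ hij, neg_mul_neg, ← Polynomial.C_mul,
          mul_comm (M j i)]
    have hcard2 : (Finset.univ \ ({i, j} : Finset (Fin d))).card = d - 2 := by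
      rw [Finset.card_sdiff_of_subset hsub, hcard, Finset.card_insert_of_notMem (by simp [hij]),
        Finset.card_singleton]
    have hcoeff : ((∏ k ∈ Finset.univ \ {i, j}, (X + C (-(M k k))))).coeff (d - 2) = 1 := by
      rw [Finset.prod_X_add_C_coeff _ _ (le_of_eq hcard2.symm), hcard2, Nat.sub_self]
      simp
    rw [hF]
    simp only [hprod, Polynomial.coeff_mul_C, hcoeff, one_mul, Equiv.Perm.sign_swap hij]
    simp [mul_comm]
  rw [hid, Finset.sum_congr rfl hswp, ← Finset.sum_add_distrib]
  refine Finset.sum_congr rfl fun p hp => ?_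
  ring

private lemma key_offdiag (d : ℕ) (g : Fin d → Fin d → ℂ) (hsymm : ∀ i j, g i j = g j i)
    (hdiag : ∀ i, g i i = 0) :
    ∑ i, ∑ j, g i j = 2 * ∑ p ∈ Pset d, g p.1 p.2 := by
  rw [← Finset.sum_product']
  have hfil : ∑ p ∈ (Finset.univ ×ˢ Finset.univ).filter
      (fun p : Fin d × Fin d => p.1 ≠ p.2), g p.1 p.2
      = ∑ p ∈ (Finset.univ ×ˢ Finset.univ : Finset (Fin d × Fin d)), g p.1 p.2 := by
    refine Finset.sum_filter_of_ne fun p _ hne => ?_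
    intro hpe
    exact hne (by rw [hpe, hdiag])
  rw [← hfil]
  have hsplit : ((Finset.univ ×ˢ Finset.univ).filter
      (fun p : Fin d × Fin d => p.1 ≠ p.2))
      = Pset d ∪ (Pset d).image Prod.swap := by
    ext ⟨i, j⟩
    simp only [Finset.mem_filter, Finset.mem_product, Finset.mem_univ, true_and,
      Finset.mem_union, Finset.mem_image, Pset, Prod.exists]
    constructor
    · intro hne
      rcases lt_or_gt_of_ne hne with h | h
      · exact Or.inl (by simpa using h)
      · exact Or.inr ⟨j, i, by simpa using h, rfl⟩
    · rintro (h | ⟨a, b, hab, h⟩)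
      · have h' : i < j := by simpa [Pset] using h
        exact h'.ne
      · obtain ⟨h1, h2⟩ := Prod.ext_iff.mp h
        simp only [Prod.fst_swap, Prod.snd_swap] at h1 h2
        have hab' : a < b := by simpa [Pset] using hab
        subst h1; subst h2
        exact hab'.ne'
  rw [hsplit, Finset.sum_union, Finset.sum_image]
  · have : ∑ p ∈ Pset d, g (Prod.swap p).1 (Prod.swap p).2 = ∑ p ∈ Pset d, g p.1 p.2 := by
      exact Finset.sum_congr rfl fun p _ => hsymm p.2 p.1
    rw [this]; ring
  · rintro ⟨a, b⟩ _ ⟨c, e⟩ _ h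
    simpa [Prod.ext_iff, and_comm] using h
  · rw [Finset.disjoint_left]
    rintro ⟨i, j⟩ hp hq
    simp only [Pset, Finset.mem_filter, Finset.mem_image, Prod.exists] at hp hq
    obtain ⟨a, b, hab, h⟩ := hq
    rcases Prod.ext_iff.mp h with ⟨h1, h2⟩
    subst h1; subst h2
    exact absurd (hp.2.trans hab.2) (lt_irrefl _)

private lemma trace_sq (hd : 2 ≤ d) (M : Matrix (Fin d) (Fin d) ℂ) :
    (M * M).trace = M.trace ^ 2 - 2 * M.charpoly.coeff (d - 2) := by
  rw [charpoly_coeff_sub_two hd]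
  have h1 : (M * M).trace = ∑ i, ∑ j, M i j * M j i := by
    simp [Matrix.trace, Matrix.mul_apply, Matrix.diag]
  have h2 : M.trace ^ 2 = ∑ i, ∑ j, M i i * M j j := by
    rw [Matrix.trace, sq, Finset.sum_mul_sum]
    rfl
  have key := key_offdiag d (fun i j => M i i * M j j - M i j * M j i)
    (fun i j => by ring) (fun i => by ring)
  have expand : ∑ i, ∑ j, (M i i * M j j - M i j * M j i)
      = (∑ i, ∑ j, M i i * M j j) - ∑ i, ∑ j, M i j * M j i := by
    simp [Finset.sum_sub_distrib]
  rw [h1, h2]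
  linear_combination expand - key

private lemma trace_sq_eq (hd : 2 ≤ d) {M N : Matrix (Fin d) (Fin d) ℂ}
    (h : M.charpoly = N.charpoly) : (M * M).trace = (N * N).trace := by
  haveI : Nonempty (Fin d) := ⟨⟨0, by omega⟩⟩
  have ht : M.trace = N.trace := by
    rw [Matrix.trace_eq_neg_charpoly_coeff, h, ← Matrix.trace_eq_neg_charpoly_coeff]
  rw [trace_sq hd M, trace_sq hd N, ht, h]


variable {d : ℕ}

private def outer (v : Fin d → ℂ) : Matrix (Fin d) (Fin d) ℂ :=
  Matrix.of fun i j => v i * (starRingEnd ℂ) (v j)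

private lemma outer_posSemidef (v : Fin d → ℂ) : (outer v).PosSemidef := by
  rw [Matrix.posSemidef_iff_dotProduct_mulVec]
  constructor
  · ext i j
    simp [outer, Matrix.conjTranspose_apply, mul_comm]
  · intro x
    have h : star x ⬝ᵥ (outer v).mulVec x
        = star (star v ⬝ᵥ x) * (star v ⬝ᵥ x) := by
      simp only [dotProduct, Matrix.mulVec, outer, Matrix.of_apply, Pi.star_apply,
        Finset.mul_sum, Finset.sum_mul, star_sum, star_mul', RCLike.star_def]
      rw [Finset.sum_comm]
      refine Finset.sum_congr rfl fun i _ => Finset.sum_congr rfl fun j _ => ?_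
      ring_nf
      simp [mul_comm, mul_left_comm, mul_assoc]
    rw [h]
    exact star_mul_self_nonneg _

private lemma outer_trace (v : Fin d → ℂ) :
    (outer v).trace = ((∑ i, Complex.normSq (v i) : ℝ) : ℂ) := by
  simp only [Matrix.trace, Matrix.diag, outer, Matrix.of_apply]
  push_cast
  exact Finset.sum_congr rfl fun i _ => (Complex.mul_conj (v i))

private lemma posSemidef_smul {M : Matrix (Fin d) (Fin d) ℂ} (hM : M.PosSemidef)
    {c : ℂ} (hc : 0 ≤ c) : (c • M).PosSemidef := by
  obtain ⟨hre, him⟩ := Complex.nonneg_iff.mp hc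
  rw [Matrix.posSemidef_iff_dotProduct_mulVec]
  constructor
  · have hstar : star c = c := by
      apply Complex.ext <;> simp [← him]
    show (c • M)ᴴ = c • M
    rw [Matrix.conjTranspose_smul, hstar, hM.1.eq]
  · intro x
    have h : star x ⬝ᵥ (c • M).mulVec x = c * (star x ⬝ᵥ M.mulVec x) := by
      rw [Matrix.smul_mulVec, dotProduct_smul, smul_eq_mul]
    rw [h]
    exact mul_nonneg hc (hM.dotProduct_mulVec_nonneg x)

private lemma outer_mem_span :
    ∀ v : Fin d → ℂ, outer v ∈ Submodule.span ℂ
      {ρ : Matrix (Fin d) (Fin d) ℂ | ρ.PosSemidef ∧ ρ.trace = 1} := by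
  intro v
  by_cases hv : v = 0
  · have h0 : outer v = 0 := by ext i j; simp [outer, hv]
    rw [h0]; exact Submodule.zero_mem _
  · set t : ℝ := ∑ i, Complex.normSq (v i) with ht
    have htpos : 0 < t := by
      obtain ⟨i, hi⟩ := Function.ne_iff.mp hv
      exact Finset.sum_pos' (fun j _ => Complex.normSq_nonneg _)
        ⟨i, Finset.mem_univ i, by simpa using hi⟩
    have hmem : ((t⁻¹ : ℝ) : ℂ) • outer v ∈
        {ρ : Matrix (Fin d) (Fin d) ℂ | ρ.PosSemidef ∧ ρ.trace = 1} := by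
      refine ⟨posSemidef_smul (outer_posSemidef v) ?_, ?_⟩
      · rw [Complex.nonneg_iff]
        constructor <;> simp [inv_nonneg, htpos.le]
      · rw [Matrix.trace_smul, outer_trace, ← ht, smul_eq_mul, ← Complex.ofReal_mul,
          inv_mul_cancel₀ htpos.ne']
        norm_num
    have hsc : outer v = ((t : ℝ) : ℂ) • (((t⁻¹ : ℝ) : ℂ) • outer v) := by
      rw [smul_smul, ← Complex.ofReal_mul, mul_inv_cancel₀ htpos.ne']
      norm_num
    rw [hsc]
    exact Submodule.smul_mem _ _ (Submodule.subset_span hmem)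

private lemma outer_single {i j : Fin d} (hij : i ≠ j) (x y : ℂ) :
    outer (fun k => x * (Pi.single i (1:ℂ) : Fin d → ℂ) k
        + y * (Pi.single j (1:ℂ) : Fin d → ℂ) k)
      = (x * (starRingEnd ℂ) x) • Matrix.single i i 1
      + (x * (starRingEnd ℂ) y) • Matrix.single i j 1
      + (y * (starRingEnd ℂ) x) • Matrix.single j i 1
      + (y * (starRingEnd ℂ) y) • Matrix.single j j 1 := by
  ext k l
  simp only [outer, Matrix.of_apply, Pi.single_apply,
    smul_eq_mul, Matrix.add_apply, Matrix.smul_apply, Matrix.single]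
  by_cases hik : i = k <;> by_cases hil : i = l <;> by_cases hjk : j = k <;>
    by_cases hjl : j = l <;>
    simp_all [map_add, _root_.map_mul, map_zero, _root_.map_one] <;>
    (try (split_ifs <;> simp_all)) <;> (try ring)

private lemma span_density_eq_top (hd : 1 ≤ d) :
    Submodule.span ℂ {ρ : Matrix (Fin d) (Fin d) ℂ | ρ.PosSemidef ∧ ρ.trace = 1} = ⊤ := by
  rw [eq_top_iff]
  intro M _
  rw [Matrix.matrix_eq_sum_single M]
  refine Submodule.sum_mem _ fun i _ => Submodule.sum_mem _ fun j _ => ?_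
  have hsb : Matrix.single i j (M i j) = M i j • Matrix.single i j (1 : ℂ) := by
    ext k l
    simp only [Matrix.smul_apply, Matrix.single, Matrix.of_apply, smul_eq_mul]
    split_ifs <;> simp
  rw [hsb]
  refine Submodule.smul_mem _ _ ?_
  by_cases hij : i = j
  · subst hij
    have h0 : Matrix.single i i (1 : ℂ) = outer (Pi.single i 1) := by
      ext k l
      by_cases hk : i = k <;> by_cases hl : i = l <;>
        simp [outer, Matrix.single, Pi.single_apply, hk, hl] <;> simp_all <;>
        (try (split_ifs <;> simp_all)) <;> grind
    rw [h0]
    exact outer_mem_span _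
  · have hU := outer_single (d := d) hij 1 0
    have hW := outer_single (d := d) hij 0 1
    have hA := outer_single (d := d) hij 1 1
    have hB := outer_single (d := d) hij 1 Complex.I
    have key : Matrix.single i j (1 : ℂ)
        = (2⁻¹ : ℂ) • ((outer fun k => (1:ℂ) * (Pi.single i (1:ℂ) : Fin d → ℂ) k
              + (1:ℂ) * (Pi.single j (1:ℂ) : Fin d → ℂ) k)
          + Complex.I • (outer fun k => (1:ℂ) * (Pi.single i (1:ℂ) : Fin d → ℂ) k
              + Complex.I * (Pi.single j (1:ℂ) : Fin d → ℂ) k)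
          - (1 + Complex.I) • (outer fun k => (1:ℂ) * (Pi.single i (1:ℂ) : Fin d → ℂ) k
              + (0:ℂ) * (Pi.single j (1:ℂ) : Fin d → ℂ) k)
          - (1 + Complex.I) • (outer fun k => (0:ℂ) * (Pi.single i (1:ℂ) : Fin d → ℂ) k
              + (1:ℂ) * (Pi.single j (1:ℂ) : Fin d → ℂ) k)) := by
      rw [hU, hW, hA, hB]
      match_scalars <;> simp [Complex.conj_I] <;> ring_nf <;>
        simp [Complex.I_sq] <;> ring
    rw [key]
    refine Submodule.smul_mem _ _ (Submodule.sub_mem _ (Submodule.sub_mem _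
      (Submodule.add_mem _ (outer_mem_span _) (Submodule.smul_mem _ _ (outer_mem_span _)))
      (Submodule.smul_mem _ _ (outer_mem_span _))) (Submodule.smul_mem _ _ (outer_mem_span _)))

private lemma trace_mul_stdBasis (B : Matrix (Fin d) (Fin d) ℂ) (i j : Fin d) :
    (B * Matrix.single j i (1 : ℂ)).trace = B i j := by
  simp only [Matrix.trace, Matrix.diag, Matrix.mul_apply, Matrix.single,
    Matrix.of_apply, mul_ite, mul_one, mul_zero]
  rw [Finset.sum_comm]
  simp [ite_and, Finset.sum_ite_eq]

/-- **Lemma L1 of the paper.** Any ℂ-linear map on `M_d(ℂ)` preserving the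
characteristic polynomial of every density matrix is unital: `Θ(1) = 1`. -/
theorem stmt_5 (d : ℕ) (hd : 1 ≤ d)
    (Θ : Matrix (Fin d) (Fin d) ℂ →ₗ[ℂ] Matrix (Fin d) (Fin d) ℂ)
    (hΘ : ∀ ρ : Matrix (Fin d) (Fin d) ℂ, ρ.PosSemidef → ρ.trace = 1 →
      (Θ ρ).charpoly = ρ.charpoly) :
    Θ 1 = 1 := by
  haveI : Nonempty (Fin d) := ⟨⟨0, by omega⟩⟩
  by_cases hd2 : 2 ≤ d
  swap
  · -- d = 1
    have hd1 : d = 1 := by omega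
    subst hd1
    have h1 := hΘ 1 Matrix.PosSemidef.one (by simp)
    have htr : (Θ 1).trace = (1 : Matrix (Fin 1) (Fin 1) ℂ).trace := by
      rw [Matrix.trace_eq_neg_charpoly_coeff, h1, ← Matrix.trace_eq_neg_charpoly_coeff]
    ext i j
    have hi : i = 0 := Subsingleton.elim _ _
    have hj : j = 0 := Subsingleton.elim _ _
    subst hi; subst hj
    rw [show (Θ 1) 0 0 = (Θ 1).trace from (Matrix.trace_fin_one _).symm, htr,
      Matrix.trace_fin_one]
  · set D := {ρ : Matrix (Fin d) (Fin d) ℂ | ρ.PosSemidef ∧ ρ.trace = 1} with hD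
    have hspan : Submodule.span ℂ D = ⊤ := span_density_eq_top hd
    -- trace preservation
    have htr : ∀ B, (Θ B).trace = B.trace := by
      have h : (Matrix.traceLinearMap (Fin d) ℂ ℂ).comp Θ
          = Matrix.traceLinearMap (Fin d) ℂ ℂ := by
        apply LinearMap.ext_on hspan
        rintro ρ ⟨h1, h2⟩
        have hc := hΘ ρ h1 h2
        show (Θ ρ).trace = ρ.trace
        rw [Matrix.trace_eq_neg_charpoly_coeff, hc, ← Matrix.trace_eq_neg_charpoly_coeff]
      intro B
      exact LinearMap.congr_fun h B
    have h2inv : (0 : ℂ) ≤ 2⁻¹ := by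
      rw [Complex.nonneg_iff]; norm_num
    -- pairwise second-trace preservation
    have hpair : ∀ ρ ∈ D, ∀ σ ∈ D, (Θ ρ * Θ σ).trace = (ρ * σ).trace := by
      rintro ρ ⟨hρ1, hρ2⟩ σ ⟨hσ1, hσ2⟩
      have h11 := trace_sq_eq hd2 (hΘ ρ hρ1 hρ2)
      have h22 := trace_sq_eq hd2 (hΘ σ hσ1 hσ2)
      have hμ1 : ((2⁻¹ : ℂ) • ρ + (2⁻¹ : ℂ) • σ).PosSemidef :=
        (posSemidef_smul hρ1 h2inv).add (posSemidef_smul hσ1 h2inv)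
      have hμ2 : ((2⁻¹ : ℂ) • ρ + (2⁻¹ : ℂ) • σ).trace = 1 := by
        rw [Matrix.trace_add, Matrix.trace_smul, Matrix.trace_smul, hρ2, hσ2]
        norm_num [smul_eq_mul]
      have hμ := trace_sq_eq hd2 (hΘ _ hμ1 hμ2)
      have hθμ : Θ ((2⁻¹ : ℂ) • ρ + (2⁻¹ : ℂ) • σ)
          = (2⁻¹ : ℂ) • Θ ρ + (2⁻¹ : ℂ) • Θ σ := by
        rw [map_add, _root_.map_smul, _root_.map_smul]
      rw [hθμ] at hμ
      have expand : ∀ X Y : Matrix (Fin d) (Fin d) ℂ,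
          ((((2⁻¹ : ℂ) • X + (2⁻¹ : ℂ) • Y)) * (((2⁻¹ : ℂ) • X + (2⁻¹ : ℂ) • Y))).trace
          = (4⁻¹ : ℂ) * ((X * X).trace + ((X * Y).trace + (Y * X).trace) + (Y * Y).trace) := by
        intro X Y
        simp only [Matrix.add_mul, Matrix.mul_add, Matrix.smul_mul, Matrix.mul_smul,
          Matrix.trace_add, Matrix.trace_smul, smul_smul, smul_eq_mul]
        ring
      rw [expand, expand] at hμ
      rw [Matrix.trace_mul_comm (Θ σ) (Θ ρ), Matrix.trace_mul_comm σ ρ] at hμ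
      linear_combination 2 * hμ - 2⁻¹ * h11 - 2⁻¹ * h22
    -- bilinear extension
    have hbil : ∀ B C, (Θ B * Θ C).trace = (B * C).trace := by
      have hβ : LinearMap.mk₂ ℂ
          (fun B C : Matrix (Fin d) (Fin d) ℂ => (Θ B * Θ C).trace - (B * C).trace)
          (fun B₁ B₂ C => by
            rw [map_add, Matrix.add_mul, Matrix.add_mul, Matrix.trace_add, Matrix.trace_add]
            ring)
          (fun c B C => by
            rw [_root_.map_smul, Matrix.smul_mul, Matrix.smul_mul, Matrix.trace_smul,
              Matrix.trace_smul, smul_eq_mul, smul_eq_mul, smul_eq_mul]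
            ring)
          (fun B C₁ C₂ => by
            rw [map_add, Matrix.mul_add, Matrix.mul_add, Matrix.trace_add, Matrix.trace_add]
            ring)
          (fun c B C => by
            rw [_root_.map_smul, Matrix.mul_smul, Matrix.mul_smul, Matrix.trace_smul,
              Matrix.trace_smul, smul_eq_mul, smul_eq_mul, smul_eq_mul]
            ring) = 0 := by
        apply LinearMap.ext_on hspan
        intro ρ hρ
        apply LinearMap.ext_on hspan
        intro σ hσ
        show (Θ ρ * Θ σ).trace - (ρ * σ).trace = 0
        rw [hpair ρ hρ σ hσ, sub_self]
      intro B C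
      have h0 := LinearMap.congr_fun (LinearMap.congr_fun hβ B) C
      simp only [LinearMap.mk₂_apply, LinearMap.zero_apply] at h0
      exact sub_eq_zero.mp h0
    -- injectivity and surjectivity
    have hinj : Function.Injective Θ := by
      rw [← LinearMap.ker_eq_bot]
      rw [Submodule.eq_bot_iff]
      intro B hB
      rw [LinearMap.mem_ker] at hB
      have hBC : ∀ C, (B * C).trace = 0 := by
        intro C
        rw [← hbil, hB, Matrix.zero_mul, Matrix.trace_zero]
      ext i j
      have h0 := hBC (Matrix.single j i 1)
      rw [trace_mul_stdBasis] at h0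
      simpa using h0
    have hsurj : Function.Surjective Θ := LinearMap.surjective_of_injective hinj
    -- conclusion
    have hfin : ∀ C, ((Θ 1 - 1) * C).trace = 0 := by
      intro C
      obtain ⟨B, rfl⟩ := hsurj C
      rw [Matrix.sub_mul, Matrix.trace_sub, hbil 1 B, Matrix.one_mul, Matrix.one_mul, htr B,
        sub_self]
    have hz : Θ 1 - 1 = 0 := by
      ext i j
      have h0 := hfin (Matrix.single j i 1)
      rw [trace_mul_stdBasis] at h0
      simpa using h0
    exact sub_eq_zero.mp hz
end

section
/- Let d ≥ 1 and let Θ : M_d(ℂ) → M_d(ℂ) be a ℂ-linear map such that for every d×d density matrix ρ, the characteristic polynomial of Θ(ρ) equals that of ρ. Then for every Hermitian matrix A ∈ M_d(ℂ), the characteristic polynomial of Θ(A) equals the characteristic polynomial of A. -/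
open Matrix ComplexOrder

open Polynomial

lemma charpoly_smul_comp {d : ℕ} (c : ℂ) (M : Matrix (Fin d) (Fin d) ℂ) :
    ((c • M).charpoly).comp (C c * X) = C c ^ d * M.charpoly := by
  have hφ : ∀ p : ℂ[X], p.comp (C c * X) = eval₂RingHom C (C c * X) p := fun p => rfl
  have h : (charmatrix (c • M)).map (eval₂RingHom C (C c * X)) = C c • charmatrix M := by
    refine Matrix.ext fun i j => ?_
    rw [Matrix.map_apply, Matrix.smul_apply]
    by_cases h : i = j
    · subst h
      rw [charmatrix_apply_eq, charmatrix_apply_eq, coe_eval₂RingHom, eval₂_sub, eval₂_X,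
        eval₂_C, Matrix.smul_apply, smul_eq_mul, C_mul, smul_eq_mul]
      ring
    · rw [charmatrix_apply_ne _ _ _ h, charmatrix_apply_ne _ _ _ h, coe_eval₂RingHom,
        eval₂_neg, eval₂_C, Matrix.smul_apply, smul_eq_mul, C_mul, smul_eq_mul]
      ring
  rw [Matrix.charpoly, Matrix.charpoly, hφ, RingHom.map_det, RingHom.mapMatrix_apply, h,
    Matrix.det_smul, Fintype.card_fin]

lemma charpoly_eq_of_smul_eq {d : ℕ} {c : ℂ} (hc : c ≠ 0)
    {M N : Matrix (Fin d) (Fin d) ℂ}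
    (h : (c • M).charpoly = (c • N).charpoly) : M.charpoly = N.charpoly := by
  have h2 := congrArg (fun p => p.comp (C c * X)) h
  simp only [charpoly_smul_comp] at h2
  exact mul_left_cancel₀ (pow_ne_zero _ (Polynomial.C_ne_zero.mpr hc)) h2

/-- **Lemma 3-1 of the paper.** Any ℂ-linear map on `M_d(ℂ)` preserving the
characteristic polynomial of every density matrix preserves the characteristic
polynomial of every Hermitian matrix. -/
theorem stmt_6 (d : ℕ) (hd : 1 ≤ d)
    (Θ : Matrix (Fin d) (Fin d) ℂ →ₗ[ℂ] Matrix (Fin d) (Fin d) ℂ)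
    (hΘ : ∀ ρ : Matrix (Fin d) (Fin d) ℂ, ρ.PosSemidef → ρ.trace = 1 →
      (Θ ρ).charpoly = ρ.charpoly) :
    ∀ A : Matrix (Fin d) (Fin d) ℂ, A.IsHermitian →
      (Θ A).charpoly = A.charpoly := by
  intro A hA
  set B := Θ A with hB
  set J := Θ 1 with hJ
  set e : Fin d → ℝ := hA.eigenvalues with he
  set U : Matrix (Fin d) (Fin d) ℂ := (hA.eigenvectorUnitary : Matrix (Fin d) (Fin d) ℂ)
    with hU
  have hUU : U * star U = 1 := mem_unitaryGroup_iff.mp (hA.eigenvectorUnitary).2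
  have hUU' : star U * U = 1 := mem_unitaryGroup_iff'.mp (hA.eigenvectorUnitary).2
  set K : ℝ := ∑ i, |e i| with hK
  set Nb : ℕ := ⌈K⌉₊ + 1 with hNb
  have key : ∀ n : ℕ, Nb ≤ n →
      (B + (n : ℂ) • J).charpoly = (A + (n : ℂ) • 1).charpoly := by
    intro n hn
    have hKi : ∀ i, |e i| ≤ K :=
      fun i => Finset.single_le_sum (f := fun i => |e i|)
        (fun _ _ => abs_nonneg _) (Finset.mem_univ i)
    have hn' : K + 1 ≤ (n : ℝ) := by
      have h1 : K ≤ (⌈K⌉₊ : ℝ) := Nat.le_ceil K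
      have h2 : ((⌈K⌉₊ + 1 : ℕ) : ℝ) ≤ (n : ℝ) := by exact_mod_cast hn
      push_cast at h2
      linarith
    have hpos : ∀ i, 0 < e i + n := fun i => by
      have := abs_le.mp (hKi i); linarith
    -- spectral decomposition of A + n • 1
    have hdecomp : A + (n : ℂ) • 1 =
        U * diagonal (fun i => ((e i + n : ℝ) : ℂ)) * star U := by
      have hone : (n : ℂ) • (1 : Matrix (Fin d) (Fin d) ℂ) =
          U * ((n : ℂ) • 1) * star U := by
        rw [Matrix.mul_smul, Matrix.mul_one, Matrix.smul_mul, hUU]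
      conv_lhs => rw [hA.spectral_theorem, Unitary.conjStarAlgAut_apply, ← hU, ← he, hone]
      rw [← Matrix.add_mul, ← Matrix.mul_add]
      congr 2
      refine Matrix.ext fun i j => ?_
      by_cases h : i = j
      · subst h
        simp [Matrix.diagonal_apply_eq, Matrix.one_apply_eq]
      · simp [Matrix.diagonal_apply_ne _ h, Matrix.one_apply_ne h]
    set s : ℝ := ∑ i, (e i + n) with hs
    have hspos : 0 < s := by
      have : Nonempty (Fin d) := ⟨⟨0, hd⟩⟩
      exact Finset.sum_pos (fun i _ => hpos i) Finset.univ_nonempty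
    have hc0 : ((s : ℂ)) ≠ 0 := by
      exact_mod_cast Complex.ofReal_ne_zero.mpr hspos.ne'
    -- the density matrix
    set ρ : Matrix (Fin d) (Fin d) ℂ := ((s : ℂ))⁻¹ • (A + (n : ℂ) • 1) with hρ
    have hDs : ((s : ℂ))⁻¹ • (diagonal fun i => ((e i + n : ℝ) : ℂ)) =
        diagonal (fun i => (((e i + n) / s : ℝ) : ℂ)) := by
      refine Matrix.ext fun i j => ?_
      by_cases h : i = j
      · subst h
        simp only [Matrix.smul_apply, Matrix.diagonal_apply_eq, smul_eq_mul]
        push_cast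
        ring
      · simp [Matrix.diagonal_apply_ne _ h]
    have hρdecomp : ρ = U * diagonal (fun i => (((e i + n) / s : ℝ) : ℂ)) * star U := by
      rw [hρ, hdecomp, ← Matrix.smul_mul, ← Matrix.mul_smul, hDs]
    have hPSD : ρ.PosSemidef := by
      rw [hρdecomp]
      refine (posSemidef_diagonal_iff.mpr fun i => ?_).mul_mul_conjTranspose_same U
      exact Complex.zero_le_real.mpr (div_nonneg (hpos i).le hspos.le)
    have htr : ρ.trace = 1 := by
      rw [hρdecomp, Matrix.trace_mul_cycle, hUU', Matrix.one_mul, Matrix.trace_diagonal]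
      rw [← Complex.ofReal_sum]
      rw [← Finset.sum_div]
      rw [div_self hspos.ne']
      exact Complex.ofReal_one
    have hEq := hΘ ρ hPSD htr
    have hΘρ : Θ ρ = ((s : ℂ))⁻¹ • (B + (n : ℂ) • J) := by
      rw [hρ, Θ.map_smul, Θ.map_add, Θ.map_smul]
    rw [hΘρ, hρ] at hEq
    exact charpoly_eq_of_smul_eq (inv_ne_zero hc0) hEq
  -- polynomial interpolation
  set M1 : Matrix (Fin d) (Fin d) ℂ[X] :=
    Matrix.of (fun i j => C (B i j) + X * C (J i j)) with hM1
  set M2 : Matrix (Fin d) (Fin d) ℂ[X] :=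
    Matrix.of (fun i j => C (A i j) + X * (if i = j then 1 else 0)) with hM2
  have hmap1 : ∀ t : ℂ, M1.map (evalRingHom t) = B + t • J := by
    intro t
    refine Matrix.ext fun i j => ?_
    simp [hM1, Matrix.map_apply, Matrix.add_apply, Matrix.smul_apply, smul_eq_mul]
    ring
  have hmap2 : ∀ t : ℂ, M2.map (evalRingHom t) = A + t • 1 := by
    intro t
    refine Matrix.ext fun i j => ?_
    by_cases h : i = j <;>
      simp [hM2, Matrix.map_apply, Matrix.add_apply, Matrix.smul_apply, smul_eq_mul,
        Matrix.one_apply, h]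
  have hch1 : ∀ t : ℂ, M1.charpoly.map (evalRingHom t) = (B + t • J).charpoly := by
    intro t; rw [← hmap1 t, Matrix.charpoly_map]
  have hch2 : ∀ t : ℂ, M2.charpoly.map (evalRingHom t) = (A + t • 1).charpoly := by
    intro t; rw [← hmap2 t, Matrix.charpoly_map]
  have hmain : M1.charpoly = M2.charpoly := by
    refine Polynomial.ext fun k => ?_
    have hzero : M1.charpoly.coeff k - M2.charpoly.coeff k = 0 := by
      apply Polynomial.eq_zero_of_infinite_isRoot
      apply Set.Infinite.mono
        (s := (fun n : ℕ => (n : ℂ)) '' Set.Ici Nb)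
      · rintro x ⟨n, hn, rfl⟩
        have hk := key n hn
        rw [← hch1, ← hch2] at hk
        have := congrArg (fun p => p.coeff k) hk
        simp only [Polynomial.coeff_map, coe_evalRingHom] at this
        simpa [Polynomial.IsRoot] using sub_eq_zero.mpr this
      · exact (Set.Ici_infinite Nb).image (Nat.cast_injective.injOn)
    exact sub_eq_zero.mp hzero
  have h0 := congrArg (Polynomial.map (evalRingHom 0)) hmain
  rw [hch1, hch2] at h0
  simpa using h0
end

section
/- Let d ≥ 1 and let Λ : M_d(ℂ) → M_d(ℂ) be a ℂ-linear map. Then Λ preserves the determinant and the trace of every matrix A ∈ M_d(ℂ) (i.e. det(Λ(A)) = det(A) and tr(Λ(A)) = tr(A) for all A) if and only if Λ preserves the characteristic polynomial of every matrix A ∈ M_d(ℂ) (i.e. charpoly(Λ(A)) = charpoly(A) for all A). Moreover, if these equivalent conditions hold, there exists an invertible matrix S ∈ M_d(ℂ) such that either Λ(A) = S⁻¹ A S for all A ∈ M_d(ℂ), or Λ(A) = S⁻¹ Aᵀ S for all A ∈ M_d(ℂ). -/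
open Matrix

open Polynomial

namespace StmtAux


lemma charpoly_conj {m : Type*} [Fintype m] [DecidableEq m]
    (Q A : Matrix m m ℂ) (hQ : IsUnit Q) :
    (Q⁻¹ * A * Q).charpoly = A.charpoly := by
  have hdet : IsUnit Q.det := (isUnit_iff_isUnit_det Q).mp hQ
  have h1 : Q⁻¹ * Q = 1 := nonsing_inv_mul Q hdet
  have hmap : (Q⁻¹.map (C : ℂ →+* ℂ[X])) * (Q.map C) = 1 := by
    rw [← Matrix.map_mul, h1]; simp
  have hcomm : ∀ B : Matrix m m ℂ[X], (scalar m) X * B = B * (scalar m) X := fun B =>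
    (Matrix.scalar_commute X (fun r => (Polynomial.commute_X r)) B)
  have key : charmatrix (Q⁻¹ * A * Q) =
      (Q⁻¹.map (C : ℂ →+* ℂ[X])) * charmatrix A * (Q.map C) := by
    rw [charmatrix, charmatrix, Matrix.mul_sub, Matrix.sub_mul]
    congr 1
    · rw [Matrix.mul_assoc, hcomm (Q.map (C : ℂ →+* ℂ[X])), ← Matrix.mul_assoc, hmap,
        Matrix.one_mul]
    · show C.mapMatrix (Q⁻¹ * A * Q) = _
      rw [_root_.map_mul, _root_.map_mul]
      rfl
  rw [Matrix.charpoly, key, det_mul, det_mul, Matrix.charpoly]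
  have h2 : (Q⁻¹.map (C : ℂ →+* ℂ[X])).det * (Q.map C).det = 1 := by
    rw [← det_mul, hmap, det_one]
  calc (Q⁻¹.map (C : ℂ →+* ℂ[X])).det * (charmatrix A).det * (Q.map C).det
      = (charmatrix A).det * ((Q⁻¹.map (C : ℂ →+* ℂ[X])).det * (Q.map C).det) := by ring
    _ = (charmatrix A).det := by rw [h2, mul_one]



lemma fromBlocks_pow {m p : Type*} [Fintype m] [Fintype p] [DecidableEq m] [DecidableEq p]
    (A : Matrix m m ℂ) (D : Matrix p p ℂ) (r : Matrix p m ℂ) (k : ℕ) :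
    ∃ r' : Matrix p m ℂ, (fromBlocks A 0 r D) ^ k = fromBlocks (A ^ k) 0 r' (D ^ k) := by
  induction k with
  | zero => exact ⟨0, by simp [Matrix.fromBlocks_one]⟩
  | succ k ih =>
    obtain ⟨r', hr'⟩ := ih
    refine ⟨r' * A + D ^ k * r, ?_⟩
    rw [pow_succ, hr', Matrix.fromBlocks_multiply, pow_succ, pow_succ]
    congr 1 <;> simp

lemma trace_reindex {m p : Type*} [Fintype m] [Fintype p] [DecidableEq m] [DecidableEq p]
    (e : m ≃ p) (A : Matrix m m ℂ) : (reindex e e A).trace = A.trace := by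
  simp only [Matrix.trace, Matrix.reindex_apply, Matrix.diag, Matrix.submatrix_apply]
  exact Fintype.sum_equiv e.symm _ _ (fun x => rfl)

lemma trace_fromBlocks {m p : Type*} [Fintype m] [Fintype p]
    (A : Matrix m m ℂ) (B : Matrix m p ℂ) (C' : Matrix p m ℂ) (D : Matrix p p ℂ) :
    (fromBlocks A B C' D).trace = A.trace + D.trace := by
  simp [Matrix.trace, Fintype.sum_sum_type, Matrix.fromBlocks]

lemma conj_pow {m : Type*} [Fintype m] [DecidableEq m] (Q M : Matrix m m ℂ)
    (h1 : Q⁻¹ * Q = 1) (k : ℕ) : (Q⁻¹ * M * Q) ^ k = Q⁻¹ * M ^ k * Q := by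
  induction k with
  | zero => rw [pow_zero, pow_zero, Matrix.mul_one, h1]
  | succ k ih =>
    rw [pow_succ, ih, pow_succ]
    calc Q⁻¹ * M ^ k * Q * (Q⁻¹ * M * Q) = Q⁻¹ * M ^ k * (Q * Q⁻¹) * M * Q := by
          noncomm_ring
      _ = Q⁻¹ * (M ^ k * M) * Q := by
          rw [mul_eq_one_comm.mp h1]
          noncomm_ring



/-- An invertible matrix with prescribed nonzero first column. -/
lemma exists_unit_col {n : ℕ} (v : Fin (n+1) → ℂ) (hv : v ≠ 0) :
    ∃ Q : Matrix (Fin (n+1)) (Fin (n+1)) ℂ, IsUnit Q ∧ ∀ i, Q i 0 = v i := by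
  obtain ⟨p, hp⟩ : ∃ p, v p ≠ 0 := Function.ne_iff.mp hv
  set τ := Equiv.swap (0 : Fin (n+1)) p with hτ
  have hτp : ∀ j, j ≠ 0 → p ≠ τ j := by
    intro j hj h
    apply hj
    have : τ.symm p = j := by rw [h]; exact τ.symm_apply_apply j
    rw [hτ, Equiv.symm_swap, Equiv.swap_apply_right] at this
    exact this.symm
  refine ⟨Matrix.of fun i j => if j = 0 then v i else if i = τ j then 1 else 0, ?_, fun i => by simp⟩
  rw [isUnit_iff_isUnit_det, isUnit_iff_ne_zero]
  intro hdet
  obtain ⟨c, hc, hQc⟩ := Matrix.exists_mulVec_eq_zero_iff.mpr hdet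
  have hval : ∀ i, ∑ j, (if j = 0 then v i else if i = τ j then 1 else 0) * c j = 0 := by
    intro i
    have := congrFun hQc i
    simpa [Matrix.mulVec, dotProduct] using this
  have hc0 : c 0 = 0 := by
    have h := hval p
    rw [Finset.sum_eq_single 0] at h
    · simp only [if_pos rfl] at h
      rcases mul_eq_zero.mp h with h | h
      · exact absurd h hp
      · exact h
    · intro j _ hj
      rw [if_neg hj, if_neg (hτp j hj), zero_mul]
    · simp
  apply hc
  funext j
  by_cases hj : j = 0
  · rw [hj]; exact hc0
  · have h := hval (τ j)
    rw [Finset.sum_eq_single j] at h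
    · rw [if_neg hj, if_pos rfl, one_mul] at h
      exact h
    · intro b _ hb
      by_cases hb0 : b = 0
      · rw [hb0, if_pos rfl, hc0, mul_zero]
      · rw [if_neg hb0, if_neg (fun h : τ j = τ b => hb (τ.injective h).symm), zero_mul]
    · simp [hj]


theorem trace_pow_eq_sum_pow_roots :
    ∀ (n : ℕ) (M : Matrix (Fin n) (Fin n) ℂ) (k : ℕ),
      (M ^ k).trace = (M.charpoly.roots.map (· ^ k)).sum := by
  intro n
  induction n with
  | zero =>
    intro M k
    have h1 : M.charpoly = 1 := by
      have hm : M.charpoly.Monic := M.charpoly_monic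
      have : M.charpoly.natDegree = 0 := by
        rw [M.charpoly_natDegree_eq_dim]; simp
      exact hm.natDegree_eq_zero.mp this
    rw [h1, Polynomial.roots_one]
    simp [Matrix.trace]
  | succ n ih =>
    intro M k
    -- eigenvector
    obtain ⟨μ, hμ⟩ := Module.End.exists_eigenvalue (Matrix.mulVecLin M)
    obtain ⟨v, hv⟩ := hμ.exists_hasEigenvector
    have hv0 : v ≠ 0 := hv.right
    have hMv : M *ᵥ v = μ • v := by
      have := Module.End.mem_eigenspace_iff.mp hv.1
      simpa [Matrix.mulVecLin] using this
    obtain ⟨Q, hQ, hQ0⟩ := exists_unit_col v hv0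
    have hdet : IsUnit Q.det := (isUnit_iff_isUnit_det Q).mp hQ
    have h1 : Q⁻¹ * Q = 1 := nonsing_inv_mul Q hdet
    have h1' : Q * Q⁻¹ = 1 := mul_nonsing_inv Q hdet
    set B := Q⁻¹ * M * Q with hB
    set e₀ : Fin (n+1) → ℂ := Pi.single 0 1 with he₀
    have hQe : Q *ᵥ (e₀ : Fin (n+1) → ℂ) = v := by
      funext i
      rw [he₀, Matrix.mulVec_single_one]
      exact hQ0 i
    have hQiv : Q⁻¹ *ᵥ v = (e₀ : Fin (n+1) → ℂ) := by
      rw [← hQe, Matrix.mulVec_mulVec, h1, Matrix.one_mulVec]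
    have hBe : B *ᵥ (e₀ : Fin (n+1) → ℂ) = μ • (e₀ : Fin (n+1) → ℂ) := by
      have e1 : B * Q⁻¹ = Q⁻¹ * M := by
        rw [hB, Matrix.mul_assoc (Q⁻¹ * M) Q Q⁻¹, h1', Matrix.mul_one]
      calc B *ᵥ (e₀ : Fin (n+1) → ℂ) = B *ᵥ (Q⁻¹ *ᵥ v) := by rw [hQiv]
        _ = (B * Q⁻¹) *ᵥ v := by rw [Matrix.mulVec_mulVec]
        _ = (Q⁻¹ * M) *ᵥ v := by rw [e1]
        _ = Q⁻¹ *ᵥ (M *ᵥ v) := by rw [Matrix.mulVec_mulVec]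
        _ = Q⁻¹ *ᵥ (μ • v) := by rw [hMv]
        _ = μ • (Q⁻¹ *ᵥ v) := by rw [Matrix.mulVec_smul]
        _ = μ • (e₀ : Fin (n+1) → ℂ) := by rw [hQiv]
    have hcol : ∀ i, B i 0 = if i = 0 then μ else 0 := by
      intro i
      have h := congrFun hBe i
      rw [he₀, Matrix.mulVec_single_one] at h
      by_cases hi : i = 0 <;> simp [hi, he₀] at h ⊢ <;> exact h
    set e : Fin (n+1) ≃ Sum (Fin n) Unit :=
      (finSuccEquiv n).trans (Equiv.optionEquivSumPUnit _) with he
    have hesymm₁ : ∀ i : Fin n, e.symm (Sum.inl i) = i.succ := by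
      intro i; simp [he, finSuccEquiv_symm_some]
    have hesymm₂ : ∀ u : Unit, e.symm (Sum.inr u) = 0 := by
      intro u; simp [he, finSuccEquiv_symm_none]
    set N : Matrix (Fin n) (Fin n) ℂ := Matrix.of fun i j => B i.succ j.succ with hN
    set r : Matrix Unit (Fin n) ℂ := Matrix.of fun _ j => B 0 j.succ with hr
    set D : Matrix Unit Unit ℂ := Matrix.diagonal (fun _ => μ) with hD
    have hT : reindex e e B = fromBlocks N 0 r D := by
      ext i j
      rcases i with i | i <;> rcases j with j | j
      · simp [Matrix.reindex_apply, Matrix.submatrix_apply, hesymm₁, hN, Matrix.fromBlocks]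
      · simp only [Matrix.reindex_apply, Matrix.submatrix_apply, hesymm₁, hesymm₂,
          Matrix.fromBlocks_apply₁₂, Matrix.zero_apply]
        rw [hcol i.succ, if_neg (Fin.succ_ne_zero i)]
      · simp [Matrix.reindex_apply, Matrix.submatrix_apply, hesymm₁, hesymm₂, hr,
          Matrix.fromBlocks]
      · simp only [Matrix.reindex_apply, Matrix.submatrix_apply, hesymm₂,
          Matrix.fromBlocks_apply₂₂]
        rw [hcol 0, if_pos rfl, hD]
        simp [Matrix.diagonal]
    have hDch : D.charpoly = X - C μ := by
      have htri : D.BlockTriangular id := by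
        intro i j hij
        cases i; cases j; exact absurd hij (lt_irrefl _)
      rw [Matrix.charpoly_of_upperTriangular D htri]
      simp [hD]
    have hch : M.charpoly = N.charpoly * (X - C μ) := by
      have h2 : B.charpoly = M.charpoly := charpoly_conj Q M hQ
      have h3 : (reindex e e B).charpoly = B.charpoly := Matrix.charpoly_reindex e B
      rw [← h2, ← h3, hT, Matrix.charpoly_fromBlocks_zero₁₂, hDch]
    have hpowre : ∀ k, (reindex e e B) ^ k = reindex e e (B ^ k) := by
      intro k
      induction k with
      | zero => simp
      | succ k ihk =>
        rw [pow_succ, ihk, pow_succ]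
        simp [Matrix.reindex_apply, Matrix.submatrix_mul_equiv]
    obtain ⟨r', hpow⟩ := fromBlocks_pow N D r k
    have htr : (M ^ k).trace = (N ^ k).trace + μ ^ k := by
      have t1 : (B ^ k).trace = (M ^ k).trace := by
        rw [conj_pow Q M h1 k, Matrix.trace_mul_cycle, h1', Matrix.one_mul]
      have t2 : (B ^ k).trace = (N ^ k).trace + μ ^ k := by
        rw [← trace_reindex e (B ^ k), ← hpowre k, hT, hpow, trace_fromBlocks, hD,
          Matrix.diagonal_pow, Matrix.trace_diagonal]
        simp
      rw [← t1, t2]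
    rw [htr, ih N k, hch, Polynomial.roots_mul
      (mul_ne_zero N.charpoly_monic.ne_zero (Polynomial.X_sub_C_ne_zero μ)),
      Polynomial.roots_X_sub_C]
    rw [Multiset.map_add, Multiset.sum_add]
    simp



lemma trace_mul_E {n : ℕ} (A : Matrix (Fin n) (Fin n) ℂ) (i j : Fin n) :
    (A * single j i 1).trace = A i j := by
  rw [Matrix.trace]
  rw [Finset.sum_eq_single i]
  · rw [Matrix.diag_apply, Matrix.mul_single_apply_same, mul_one]
  · intro b _ hb
    rw [Matrix.diag_apply, Matrix.mul_single_apply_of_ne 1 j i b b hb]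
  · simp

lemma eq_zero_of_trace_mul_right {n : ℕ} (A : Matrix (Fin n) (Fin n) ℂ)
    (h : ∀ B, (A * B).trace = 0) : A = 0 := by
  ext i j
  have := h (single j i 1)
  rw [trace_mul_E] at this
  simpa using this

lemma matrix_prime {n : ℕ} (u v : Matrix (Fin n) (Fin n) ℂ)
    (h : ∀ x, u * x * v = 0) : u = 0 ∨ v = 0 := by
  by_contra hc
  push_neg at hc
  obtain ⟨hu, hv⟩ := hc
  have hue : ∃ p q, u p q ≠ 0 := by
    by_contra h'
    push_neg at h'
    exact hu (by ext p q; simpa using h' p q)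
  have hve : ∃ r s, v r s ≠ 0 := by
    by_contra h'
    push_neg at h'
    exact hv (by ext r s; simpa using h' r s)
  obtain ⟨p, q, hpq⟩ := hue
  obtain ⟨r, s, hrs⟩ := hve
  have := congrFun (congrFun (h (single q r 1)) p) s
  rw [Matrix.mul_apply] at this
  rw [Finset.sum_eq_single r] at this
  · rw [Matrix.mul_single_apply_same, mul_one] at this
    simp only [Matrix.zero_apply] at this
    rcases mul_eq_zero.mp this with h' | h'
    · exact hpq h'
    · exact hrs h'
  · intro b _ hb
    rw [Matrix.mul_single_apply_of_ne 1 q r p b hb, zero_mul]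
  · simp

lemma anti_prime {n : ℕ} (u v : Matrix (Fin n) (Fin n) ℂ)
    (h : ∀ x, u * x * v + v * x * u = 0) : u = 0 ∨ v = 0 := by
  have h' : ∀ x, u * x * v = -(v * x * u) := fun x =>
    eq_neg_of_add_eq_zero_left (h x)
  have key : ∀ x y, v * x * v * y * u = 0 := by
    intro x y
    have c1 : u * (x * v * y) * v = -(v * (x * v * y) * u) := h' (x * v * y)
    have c2 : u * x * (v * y * v) = u * (x * v * y) * v := by noncomm_ring
    have c3 : u * x * v * y * v = v * x * v * y * u := by
      calc u * x * v * y * v = (u * x * v) * y * v := by noncomm_ring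
        _ = (-(v * x * u)) * y * v := by rw [h' x]
        _ = -(v * x * (u * y * v)) := by noncomm_ring
        _ = -(v * x * (-(v * y * u))) := by rw [h' y]
        _ = v * x * v * y * u := by noncomm_ring
    have c4 : u * x * v * y * v = -(v * x * v * y * u) := by
      calc u * x * v * y * v = u * (x * v * y) * v := by noncomm_ring
        _ = -(v * (x * v * y) * u) := c1
        _ = -(v * x * v * y * u) := by noncomm_ring
    have : v * x * v * y * u = -(v * x * v * y * u) := c3.symm.trans c4
    have h2 : (2 : ℂ) • (v * x * v * y * u) = 0 := by
      rw [two_smul]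
      calc v * x * v * y * u + v * x * v * y * u
          = -(v * x * v * y * u) + v * x * v * y * u := by rw [← this]
        _ = 0 := by abel
    simpa [smul_eq_zero] using h2
  by_cases hu : u = 0
  · exact Or.inl hu
  · right
    have hvv : ∀ x, v * x * v = 0 := by
      intro x
      rcases matrix_prime (v * x * v) u (fun y => key x y) with h'' | h''
      · exact h''
      · exact absurd h'' hu
    rcases matrix_prime v v hvv with h'' | h''
    · exact h''
    · exact h''



lemma inner_of_mult (d : ℕ) (hd : 1 ≤ d)
    (Λ : Matrix (Fin d) (Fin d) ℂ →ₗ[ℂ] Matrix (Fin d) (Fin d) ℂ)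
    (htr : ∀ A, (Λ A).trace = A.trace)
    (hmul : ∀ A B, Λ (A * B) = Λ A * Λ B) :
    ∃ S : Matrix (Fin d) (Fin d) ℂ, IsUnit S ∧ ∀ A, Λ A = S⁻¹ * A * S := by
  haveI : NeZero d := ⟨by omega⟩
  set F : Fin d → Fin d → Matrix (Fin d) (Fin d) ℂ :=
    fun i j => Λ (single i j 1) with hF
  have hFmul : ∀ i j k l, F i j * F k l = if j = k then F i l else 0 := by
    intro i j k l
    rw [hF]
    dsimp only
    rw [← hmul]
    by_cases h : j = k
    · subst h
      rw [if_pos rfl, Matrix.single_mul_single_same, one_mul]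
    · rw [if_neg h, Matrix.single_mul_single_of_ne _ _ _ _ h, map_zero]
  have hF00 : F 0 0 ≠ 0 := by
    intro h
    have h1 := htr (single (0 : Fin d) 0 1)
    rw [show Λ (single (0 : Fin d) 0 1) = F 0 0 from rfl, h,
      Matrix.trace_zero, Matrix.trace_single_eq_same] at h1
    exact one_ne_zero h1.symm
  obtain ⟨w, hw⟩ : ∃ w, F 0 0 *ᵥ w ≠ 0 := by
    by_contra hcon
    push_neg at hcon
    apply hF00
    ext i j
    have := congrFun (hcon (Pi.single j 1)) i
    rw [Matrix.mulVec_single_one] at this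
    simpa using this
  set W : Fin d → ℂ := F 0 0 *ᵥ w with hW
  set v : Fin d → (Fin d → ℂ) := fun k => F k 0 *ᵥ W with hv
  have hFv : ∀ i j k, F i j *ᵥ v k = if j = k then v i else 0 := by
    intro i j k
    show F i j *ᵥ (F k 0 *ᵥ W) = _
    rw [Matrix.mulVec_mulVec, hFmul i j k 0]
    by_cases h : j = k
    · rw [if_pos h, if_pos h]
    · rw [if_neg h, if_neg h, Matrix.zero_mulVec]
  have hv00 : v 0 = W := by
    show F 0 0 *ᵥ (F 0 0 *ᵥ w) = W
    rw [Matrix.mulVec_mulVec, hFmul 0 0 0 0, if_pos rfl]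
  have hv0 : v 0 ≠ 0 := by rw [hv00]; exact hw
  set S : Matrix (Fin d) (Fin d) ℂ := Matrix.of (fun p k => v k p) with hS
  have hSmulVec : ∀ c : Fin d → ℂ, S *ᵥ c = ∑ k, c k • v k := by
    intro c
    funext p
    simp [Matrix.mulVec, dotProduct, hS, Finset.sum_apply, mul_comm]
  have hSunit : IsUnit S := by
    rw [isUnit_iff_isUnit_det, isUnit_iff_ne_zero]
    intro hdet
    obtain ⟨c, hc, hScz⟩ := Matrix.exists_mulVec_eq_zero_iff.mpr hdet
    apply hc
    funext j
    have h1 : F 0 j *ᵥ (S *ᵥ c) = c j • v 0 := by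
      rw [hSmulVec]
      calc F 0 j *ᵥ (∑ k, c k • v k) = ∑ k, c k • (F 0 j *ᵥ v k) := by
            simp only [← Matrix.mulVecLin_apply, map_sum, _root_.map_smul]
        _ = ∑ k, c k • (if j = k then v 0 else 0) := by simp only [hFv]
        _ = c j • v 0 := by simp
    rw [hScz, Matrix.mulVec_zero] at h1
    rcases smul_eq_zero.mp h1.symm with h | h
    · exact h
    · exact absurd h hv0
  have hdetS : IsUnit S.det := (isUnit_iff_isUnit_det S).mp hSunit
  have hcommE : ∀ i j, Λ (single i j 1) * S = S * single i j 1 := by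
    intro i j
    ext p k
    have hL : (F i j * S) p k = (F i j *ᵥ v k) p := by
      simp [Matrix.mul_apply, Matrix.mulVec, dotProduct, hS]
    rw [show Λ (single i j 1) = F i j from rfl, hL, hFv i j k]
    by_cases h : k = j
    · subst h
      rw [Matrix.mul_single_apply_same, if_pos rfl]
      simp [hS]
    · rw [Matrix.mul_single_apply_of_ne 1 i j p k h,
        if_neg (fun hh => h hh.symm)]
      simp
  have hcomm : ∀ A, Λ A * S = S * A := by
    have heq : (LinearMap.mulRight ℂ S).comp Λ =
        LinearMap.mulLeft ℂ S := by
      apply Module.Basis.ext (Matrix.stdBasis ℂ (Fin d) (Fin d))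
      rintro ⟨i, j⟩
      rw [Matrix.stdBasis_eq_single]
      simpa using hcommE i j
    intro A
    have := DFunLike.congr_fun heq A
    simpa using this
  refine ⟨S⁻¹, ?_, fun A => ?_⟩
  · exact (isUnit_iff_isUnit_det _).mpr (Matrix.isUnit_nonsing_inv_det S hdetS)
  · rw [Matrix.nonsing_inv_nonsing_inv S hdetS, ← hcomm A, Matrix.mul_assoc,
      Matrix.mul_nonsing_inv S hdetS, Matrix.mul_one]


theorem marcus_moyls (d : ℕ) (hd : 1 ≤ d)
    (Λ : Matrix (Fin d) (Fin d) ℂ →ₗ[ℂ] Matrix (Fin d) (Fin d) ℂ)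
    (hch : ∀ A, (Λ A).charpoly = A.charpoly) :
    ∃ S : Matrix (Fin d) (Fin d) ℂ, IsUnit S ∧
      ((∀ A, Λ A = S⁻¹ * A * S) ∨ (∀ A, Λ A = S⁻¹ * Aᵀ * S)) := by
  haveI : NeZero d := ⟨by omega⟩
  have htrk : ∀ (A : Matrix (Fin d) (Fin d) ℂ) (k : ℕ),
      ((Λ A) ^ k).trace = (A ^ k).trace := by
    intro A k
    rw [trace_pow_eq_sum_pow_roots d (Λ A) k, trace_pow_eq_sum_pow_roots d A k, hch A]
  have htr : ∀ A, (Λ A).trace = A.trace := by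
    intro A
    have := htrk A 1
    simpa using this
  have expand2 : ∀ X Y : Matrix (Fin d) (Fin d) ℂ,
      ((X + Y) ^ 2).trace = (X ^ 2).trace + 2 * (X * Y).trace + (Y ^ 2).trace := by
    intro X Y
    have h : (X + Y) ^ 2 = X ^ 2 + (X * Y + Y * X) + Y ^ 2 := by noncomm_ring
    rw [h, trace_add, trace_add, trace_add, trace_mul_comm Y X]
    ring
  have t2 : ∀ A B : Matrix (Fin d) (Fin d) ℂ,
      (Λ A * Λ B).trace = (A * B).trace := by
    intro A B
    have e := htrk (A + B) 2
    rw [map_add, expand2, expand2, htrk A 2, htrk B 2] at e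
    linear_combination e / 2
  have expand3 : ∀ X Y : Matrix (Fin d) (Fin d) ℂ,
      ((X + Y) ^ 3).trace
        = (X ^ 3).trace + 3 * (X * X * Y).trace + 3 * (X * Y * Y).trace + (Y ^ 3).trace := by
    intro X Y
    have h : (X + Y) ^ 3 = X ^ 3 + (X * X * Y + X * Y * X + Y * X * X)
        + (X * Y * Y + Y * X * Y + Y * Y * X) + Y ^ 3 := by noncomm_ring
    rw [h]
    simp only [trace_add]
    have c1 : (X * Y * X).trace = (X * X * Y).trace := by rw [trace_mul_cycle]
    have c2 : (Y * X * X).trace = (X * X * Y).trace := by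
      rw [trace_mul_cycle, trace_mul_cycle]
    have c3 : (Y * X * Y).trace = (X * Y * Y).trace := by
      rw [trace_mul_cycle, trace_mul_cycle]
    have c4 : (Y * Y * X).trace = (X * Y * Y).trace := by rw [trace_mul_cycle]
    rw [c1, c2, c3, c4]
    ring
  have t3 : ∀ A B : Matrix (Fin d) (Fin d) ℂ,
      (Λ A * Λ A * Λ B).trace = (A * A * B).trace := by
    intro A B
    have eA := htrk (A + B) 3
    rw [map_add, expand3, expand3, htrk A 3, htrk B 3] at eA
    have eC := htrk (A - B) 3
    rw [map_sub, sub_eq_add_neg, sub_eq_add_neg, expand3, expand3, htrk A 3] at eC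
    have hodd : Odd 3 := ⟨1, rfl⟩
    simp only [hodd.neg_pow, mul_neg, neg_mul, neg_neg, trace_neg] at eC
    rw [htrk B 3] at eC
    linear_combination eA / 6 - eC / 6
  have hker : ∀ A, Λ A = 0 → A = 0 := by
    intro A hA
    apply eq_zero_of_trace_mul_right
    intro B
    have h := t2 A B
    rw [hA, Matrix.zero_mul, Matrix.trace_zero] at h
    exact h.symm
  have hinj : Function.Injective Λ := by
    intro x y h
    have := hker (x - y) (by rw [map_sub, h, sub_self])
    exact sub_eq_zero.mp this
  have hsurj : Function.Surjective Λ := LinearMap.injective_iff_surjective.mp hinj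
  have hsq : ∀ A, Λ (A * A) = Λ A * Λ A := by
    intro A
    have hz : ∀ C, ((Λ (A * A) - Λ A * Λ A) * C).trace = 0 := by
      intro C
      obtain ⟨B, rfl⟩ := hsurj C
      rw [Matrix.sub_mul, trace_sub, t2 (A * A) B, t3 A B, sub_self]
    exact sub_eq_zero.mp (eq_zero_of_trace_mul_right _ hz)
  have hjord : ∀ A B, Λ (A * B) + Λ (B * A) = Λ A * Λ B + Λ B * Λ A := by
    intro A B
    have h1 : (A + B) * (A + B) = A * A + (A * B + B * A) + B * B := by noncomm_ring
    have h2 := hsq (A + B)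
    rw [h1] at h2
    simp only [map_add] at h2
    rw [hsq A, hsq B] at h2
    have h3 : Λ (A * B) + Λ (B * A)
        = (Λ A + Λ B) * (Λ A + Λ B) - Λ A * Λ A - Λ B * Λ B := by
      rw [← h2]; abel
    rw [h3]; noncomm_ring
  have htrip : ∀ A B, Λ (A * B * A) = Λ A * Λ B * Λ A := by
    intro A B
    have hQ : Λ (A * B + B * A) = Λ A * Λ B + Λ B * Λ A := by
      rw [map_add]; exact hjord A B
    have h1 := hjord A (A * B + B * A)
    rw [hQ] at h1
    have h2 := hjord (A * A) B
    rw [hsq A] at h2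
    have hid : A * (A * B + B * A) + (A * B + B * A) * A
        = (A * A * B + B * (A * A)) + (A * B * A + A * B * A) := by noncomm_ring
    have h3 := congrArg Λ hid
    simp only [map_add] at h3
    have h4 : Λ (A * B * A) + Λ (A * B * A)
        = (Λ (A * (A * B + B * A)) + Λ ((A * B + B * A) * A))
          - (Λ (A * A * B) + Λ (B * (A * A))) := by
      have h3' : Λ (A * (A * B + B * A)) + Λ ((A * B + B * A) * A)
          = (Λ (A * A * B) + Λ (B * (A * A))) + (Λ (A * B * A) + Λ (A * B * A)) := by
        simpa only [map_add] using h3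
      rw [h3']; abel
    rw [h1, h2] at h4
    have h5 : (2 : ℂ) • Λ (A * B * A) = (2 : ℂ) • (Λ A * Λ B * Λ A) := by
      rw [two_smul, two_smul, h4]
      noncomm_ring
    exact smul_right_injective _ (two_ne_zero) h5
  have htrip2 : ∀ U W X : Matrix (Fin d) (Fin d) ℂ,
      Λ (U * X * W) + Λ (W * X * U) = Λ U * Λ X * Λ W + Λ W * Λ X * Λ U := by
    intro U W X
    have h := htrip (U + W) X
    have hexp : (U + W) * X * (U + W) = U * X * U + (U * X * W + W * X * U) + W * X * W := by
      noncomm_ring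
    rw [hexp] at h
    simp only [map_add] at h
    rw [htrip U X, htrip W X] at h
    have h2 : Λ (U * X * W) + Λ (W * X * U)
        = (Λ U + Λ W) * Λ X * (Λ U + Λ W) - Λ U * Λ X * Λ U - Λ W * Λ X * Λ W := by
      rw [← h]; abel
    rw [h2]; noncomm_ring
  -- the Herstein-type key identity
  have hmain : ∀ A B x : Matrix (Fin d) (Fin d) ℂ,
      (Λ (A * B) - Λ A * Λ B) * x * (Λ (A * B) - Λ B * Λ A)
        + (Λ (A * B) - Λ B * Λ A) * x * (Λ (A * B) - Λ A * Λ B) = 0 := by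
    intro A B x
    obtain ⟨X, rfl⟩ := hsurj x
    have h1 := htrip2 (A * B) (B * A) X
    have hid : (A * B) * X * (B * A) + (B * A) * X * (A * B)
        = A * (B * X * B) * A + B * (A * X * A) * B := by noncomm_ring
    have h2 : Λ ((A * B) * X * (B * A)) + Λ ((B * A) * X * (A * B))
        = Λ (A * (B * X * B) * A) + Λ (B * (A * X * A) * B) := by
      rw [← map_add, ← map_add, hid]
    have h3 : Λ (A * (B * X * B) * A) = Λ A * Λ B * Λ X * Λ B * Λ A := by
      rw [htrip A (B * X * B), htrip B X]; noncomm_ring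
    have h4 : Λ (B * (A * X * A) * B) = Λ B * Λ A * Λ X * Λ A * Λ B := by
      rw [htrip B (A * X * A), htrip A X]; noncomm_ring
    have hcomb : Λ (A * B) * Λ X * Λ (B * A) + Λ (B * A) * Λ X * Λ (A * B)
        = Λ A * Λ B * Λ X * Λ B * Λ A + Λ B * Λ A * Λ X * Λ A * Λ B := by
      rw [← h3, ← h4, ← h2, h1]
    have hq : Λ (B * A) = Λ A * Λ B + Λ B * Λ A - Λ (A * B) :=
      eq_sub_of_add_eq' (hjord A B)
    rw [hq] at hcomb
    have hG : (Λ (A * B) - Λ A * Λ B) * Λ X * (Λ (A * B) - Λ B * Λ A)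
        + (Λ (A * B) - Λ B * Λ A) * Λ X * (Λ (A * B) - Λ A * Λ B)
        = (Λ A * Λ B * Λ X * Λ B * Λ A + Λ B * Λ A * Λ X * Λ A * Λ B)
          - (Λ (A * B) * Λ X * (Λ A * Λ B + Λ B * Λ A - Λ (A * B))
            + (Λ A * Λ B + Λ B * Λ A - Λ (A * B)) * Λ X * Λ (A * B)) := by
      noncomm_ring
    rw [hG, ← hcomb, sub_self]
  have hpt : ∀ A B : Matrix (Fin d) (Fin d) ℂ,
      Λ (A * B) = Λ A * Λ B ∨ Λ (A * B) = Λ B * Λ A := by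
    intro A B
    rcases anti_prime _ _ (hmain A B) with h | h
    · exact Or.inl (sub_eq_zero.mp h)
    · exact Or.inr (sub_eq_zero.mp h)
  have hslot : ∀ A, (∀ B, Λ (A * B) = Λ A * Λ B) ∨ (∀ B, Λ (A * B) = Λ B * Λ A) := by
    intro A
    by_contra hcon
    push_neg at hcon
    obtain ⟨⟨B, hB⟩, ⟨C, hC⟩⟩ := hcon
    have hKB : Λ (A * B) = Λ B * Λ A := (hpt A B).resolve_left hB
    have hHC : Λ (A * C) = Λ A * Λ C := (hpt A C).resolve_right hC
    rcases hpt A (B + C) with h | h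
    · apply hB
      rw [mul_add, map_add, map_add, hHC, mul_add] at h
      exact add_right_cancel h
    · apply hC
      rw [mul_add, map_add, map_add, hKB, add_mul] at h
      exact add_left_cancel h
  have hglob : (∀ A B, Λ (A * B) = Λ A * Λ B) ∨ (∀ A B, Λ (A * B) = Λ B * Λ A) := by
    by_contra hcon
    push_neg at hcon
    obtain ⟨⟨A₁, B₁, h1⟩, ⟨A₂, B₂, h2⟩⟩ := hcon
    have hQ1 : ∀ B, Λ (A₁ * B) = Λ B * Λ A₁ :=
      (hslot A₁).resolve_left (fun h => h1 (h B₁))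
    have hP2 : ∀ B, Λ (A₂ * B) = Λ A₂ * Λ B :=
      (hslot A₂).resolve_right (fun h => h2 (h B₂))
    rcases hslot (A₁ + A₂) with h | h
    · apply h1
      have e1 := h B₁
      rw [add_mul, map_add, map_add, hP2 B₁, add_mul] at e1
      exact add_right_cancel e1
    · apply h2
      have e2 := h B₂
      rw [add_mul, map_add, map_add, hQ1 B₂, mul_add] at e2
      exact add_left_cancel e2
  rcases hglob with hmul | hanti
  · obtain ⟨S, hS, hform⟩ := inner_of_mult d hd Λ htr (fun A B => hmul A B)
    exact ⟨S, hS, Or.inl hform⟩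
  · set T : Matrix (Fin d) (Fin d) ℂ →ₗ[ℂ] Matrix (Fin d) (Fin d) ℂ :=
      { toFun := fun A => Aᵀ
        map_add' := fun A B => Matrix.transpose_add A B
        map_smul' := fun c A => Matrix.transpose_smul c A } with hT
    set Λ' := Λ.comp T with hΛ'
    have hΛ'app : ∀ A, Λ' A = Λ Aᵀ := fun A => rfl
    have htr' : ∀ A, (Λ' A).trace = A.trace := by
      intro A
      rw [hΛ'app, htr, Matrix.trace_transpose]
    have hmul' : ∀ A B, Λ' (A * B) = Λ' A * Λ' B := by
      intro A B
      rw [hΛ'app, hΛ'app, hΛ'app, Matrix.transpose_mul, hanti]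
    obtain ⟨S, hS, hform⟩ := inner_of_mult d hd Λ' htr' hmul'
    refine ⟨S, hS, Or.inr fun A => ?_⟩
    have := hform Aᵀ
    rw [hΛ'app, Matrix.transpose_transpose] at this
    exact this


lemma eq_of_trace_mul {n : ℕ} (M N : Matrix (Fin n) (Fin n) ℂ)
    (h : ∀ A, (M * A).trace = (N * A).trace) : M = N := by
  have := eq_zero_of_trace_mul_right (M - N)
    (fun B => by rw [Matrix.sub_mul, trace_sub, h, sub_self])
  exact sub_eq_zero.mp this

lemma eval_charpoly' {m : Type*} [Fintype m] [DecidableEq m] (M : Matrix m m ℂ) (x : ℂ) :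
    M.charpoly.eval x = (x • (1 : Matrix m m ℂ) - M).det := by
  rw [Matrix.charpoly, ← Polynomial.coe_evalRingHom, RingHom.map_det]
  congr 1
  ext i j
  by_cases h : i = j
  · subst h
    simp [charmatrix_apply_eq, Matrix.one_apply]
  · simp [charmatrix_apply_ne _ _ _ h, Matrix.one_apply, h]

end StmtAux



open StmtAux in
/-- **Theorem 2 of the paper (Marcus–Moyls + Minc).** A ℂ-linear map `Λ` on
`M_d(ℂ)` preserves determinant and trace of every matrix iff it preserves the
characteristic polynomial of every matrix; moreover, in that case there is an
invertible `S` with either `Λ(A) = S⁻¹ A S` for all `A` or `Λ(A) = S⁻¹ Aᵀ S`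
for all `A`. -/
theorem stmt_10 (d : ℕ) (hd : 1 ≤ d)
    (Λ : Matrix (Fin d) (Fin d) ℂ →ₗ[ℂ] Matrix (Fin d) (Fin d) ℂ) :
    ((∀ A : Matrix (Fin d) (Fin d) ℂ,
        (Λ A).det = A.det ∧ (Λ A).trace = A.trace) ↔
      (∀ A : Matrix (Fin d) (Fin d) ℂ, (Λ A).charpoly = A.charpoly)) ∧
    ((∀ A : Matrix (Fin d) (Fin d) ℂ, (Λ A).charpoly = A.charpoly) →
      (∃ S : Matrix (Fin d) (Fin d) ℂ, IsUnit S ∧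
        ((∀ A : Matrix (Fin d) (Fin d) ℂ, Λ A = S⁻¹ * A * S) ∨
         (∀ A : Matrix (Fin d) (Fin d) ℂ, Λ A = S⁻¹ * Aᵀ * S)))) := by
  constructor
  · constructor
    · intro hdt
      set J := Λ 1 with hJ
      have hdetJ : J.det = 1 := by rw [(hdt 1).1, Matrix.det_one]
      have hJu : IsUnit J.det := by rw [hdetJ]; exact isUnit_one
      set Λ' : Matrix (Fin d) (Fin d) ℂ →ₗ[ℂ] Matrix (Fin d) (Fin d) ℂ :=
        (LinearMap.mulRight ℂ J⁻¹).comp Λ with hΛ'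
      have hΛ'app : ∀ A, Λ' A = Λ A * J⁻¹ := fun A => rfl
      have hch' : ∀ A, (Λ' A).charpoly = A.charpoly := by
        intro A
        apply Polynomial.funext
        intro x
        rw [eval_charpoly', eval_charpoly', hΛ'app]
        have hx1 : x • (1 : Matrix (Fin d) (Fin d) ℂ) = (x • J) * J⁻¹ := by
          rw [Matrix.smul_mul, Matrix.mul_nonsing_inv J hJu]
        conv_lhs => rw [hx1]
        rw [← Matrix.sub_mul, Matrix.det_mul]
        have hdJi : (J⁻¹).det = 1 := by
          rw [Matrix.det_nonsing_inv, hdetJ, Ring.inverse_one]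
        rw [hdJi, mul_one]
        have hsm : x • J - Λ A = Λ (x • (1 : Matrix (Fin d) (Fin d) ℂ) - A) := by
          rw [map_sub, _root_.map_smul, ← hJ]
        rw [hsm, (hdt _).1]
      obtain ⟨S, hSu, hcase⟩ := marcus_moyls d hd Λ' hch'
      have hdetS : IsUnit S.det := (isUnit_iff_isUnit_det S).mp hSu
      have hSJS : S * J * S⁻¹ = 1 → J = 1 := by
        intro h
        have e1 : S⁻¹ * (S * J * S⁻¹) * S = J := by
          calc S⁻¹ * (S * J * S⁻¹) * S = (S⁻¹ * S) * J * (S⁻¹ * S) := by noncomm_ring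
            _ = J := by rw [Matrix.nonsing_inv_mul S hdetS, Matrix.one_mul, Matrix.mul_one]
        have e2 : S⁻¹ * (1 : Matrix (Fin d) (Fin d) ℂ) * S = 1 := by
          rw [Matrix.mul_one, Matrix.nonsing_inv_mul S hdetS]
        rw [← e1, h, e2]
      have hJ1 : J = 1 := by
        rcases hcase with hc | hc
        · have hform : ∀ A, Λ A = S⁻¹ * A * S * J := by
            intro A
            have hA := hc A
            rw [hΛ'app] at hA
            have h' : Λ A = (Λ A * J⁻¹) * J := by
              rw [Matrix.mul_assoc, Matrix.nonsing_inv_mul J hJu, Matrix.mul_one]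
            rw [h', hA]
          apply hSJS
          apply eq_of_trace_mul
          intro A
          rw [Matrix.one_mul]
          have h1 := (hdt A).2
          rw [hform A] at h1
          calc ((S * J * S⁻¹) * A).trace = ((S * J) * (S⁻¹ * A)).trace := by
                rw [Matrix.mul_assoc (S * J) S⁻¹ A]
            _ = ((S⁻¹ * A) * (S * J)).trace := trace_mul_comm _ _
            _ = (S⁻¹ * A * S * J).trace := by rw [Matrix.mul_assoc (S⁻¹ * A) S J]
            _ = A.trace := h1
        · have hform : ∀ B : Matrix (Fin d) (Fin d) ℂ, Λ Bᵀ = S⁻¹ * B * S * J := by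
            intro B
            have hA := hc Bᵀ
            rw [hΛ'app, Matrix.transpose_transpose] at hA
            have h' : Λ Bᵀ = (Λ Bᵀ * J⁻¹) * J := by
              rw [Matrix.mul_assoc, Matrix.nonsing_inv_mul J hJu, Matrix.mul_one]
            rw [h', hA]
          apply hSJS
          apply eq_of_trace_mul
          intro A
          rw [Matrix.one_mul]
          have h1 := (hdt Aᵀ).2
          rw [hform A, Matrix.trace_transpose] at h1
          calc ((S * J * S⁻¹) * A).trace = ((S * J) * (S⁻¹ * A)).trace := by
                rw [Matrix.mul_assoc (S * J) S⁻¹ A]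
            _ = ((S⁻¹ * A) * (S * J)).trace := trace_mul_comm _ _
            _ = (S⁻¹ * A * S * J).trace := by rw [Matrix.mul_assoc (S⁻¹ * A) S J]
            _ = A.trace := h1
      intro A
      have hfin : Λ' A = Λ A := by
        rw [hΛ'app, hJ1, inv_one, Matrix.mul_one]
      rw [← hfin]
      exact hch' A
    · intro hch A
      constructor
      · rw [Matrix.det_eq_sign_charpoly_coeff, Matrix.det_eq_sign_charpoly_coeff, hch A]
      · haveI : Nonempty (Fin d) := ⟨⟨0, hd⟩⟩
        rw [Matrix.trace_eq_neg_charpoly_coeff, Matrix.trace_eq_neg_charpoly_coeff, hch A]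
  · exact marcus_moyls d hd Λ
end

section
/- Let d ≥ 1 and let Λ : M_d(ℂ) → M_d(ℂ) be a ℂ-linear map. Then the characteristic polynomial of Λ(ρ) equals that of ρ for every d×d density matrix ρ if and only if the characteristic polynomial of Λ(A) equals that of A for every matrix A ∈ M_d(ℂ). -/
open Matrix ComplexOrder

open Polynomial in
private lemma stmt11_mapline {d : ℕ} (B C : Matrix (Fin d) (Fin d) ℂ) (t : ℂ) :
    (B.map Polynomial.C + (X : ℂ[X]) • C.map Polynomial.C).map (evalRingHom t) = B + t • C := by
  ext i j
  simp only [Matrix.map_apply, Matrix.add_apply, Matrix.smul_apply, map_add, coe_evalRingHom,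
    eval_add, eval_C, eval_mul, eval_X, smul_eq_mul]

open Polynomial in
private lemma stmt11_line {d : ℕ} (Λ : Matrix (Fin d) (Fin d) ℂ →ₗ[ℂ] Matrix (Fin d) (Fin d) ℂ)
    (B C : Matrix (Fin d) (Fin d) ℂ) (S : Set ℂ) (hS : S.Infinite)
    (h : ∀ t ∈ S, (Λ (B + t • C)).charpoly = (B + t • C).charpoly) (t : ℂ) :
    (Λ (B + t • C)).charpoly = (B + t • C).charpoly := by
  set P := ((Λ B).map Polynomial.C + (X : ℂ[X]) • (Λ C).map Polynomial.C).charpoly with hP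
  set Q := (B.map Polynomial.C + (X : ℂ[X]) • C.map Polynomial.C).charpoly with hQ
  have key : ∀ s : ℂ, (Λ (B + s • C)).charpoly = P.map (evalRingHom s) ∧
      (B + s • C).charpoly = Q.map (evalRingHom s) := by
    intro s
    constructor
    · rw [hP, ← Matrix.charpoly_map, stmt11_mapline, map_add, LinearMap.map_smul]
    · rw [hQ, ← Matrix.charpoly_map, stmt11_mapline]
  have hPQ : P = Q := by
    refine Polynomial.ext fun k => ?_
    have hroot : ∀ s ∈ S, Polynomial.eval s (P.coeff k - Q.coeff k) = 0 := by
      intro s hs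
      have h1 := (key s).1
      have h2 := (key s).2
      have h3 := h s hs
      rw [h1, h2] at h3
      have hc : (P.map (evalRingHom s)).coeff k = (Q.map (evalRingHom s)).coeff k := by rw [h3]
      simp only [Polynomial.coeff_map, coe_evalRingHom] at hc
      simp [hc]
    have hz : P.coeff k - Q.coeff k = 0 :=
      Polynomial.eq_zero_of_infinite_isRoot _ (hS.mono (fun s hs => hroot s hs))
    exact sub_eq_zero.mp hz
  rw [(key t).1, (key t).2, hPQ]

open Polynomial in
private lemma stmt11_evalcp {d : ℕ} (M : Matrix (Fin d) (Fin d) ℂ) (x : ℂ) :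
    M.charpoly.eval x = (x • (1 : Matrix (Fin d) (Fin d) ℂ) - M).det := by
  rw [Matrix.charpoly, ← coe_evalRingHom, RingHom.map_det]
  congr 1
  ext i j
  by_cases h : i = j <;>
  simp [charmatrix_apply, Matrix.one_apply, h, Matrix.smul_apply, Matrix.sub_apply]

private lemma stmt11_scalecp {d : ℕ} (c : ℂ) (hc : c ≠ 0) (M N : Matrix (Fin d) (Fin d) ℂ)
    (h : M.charpoly = N.charpoly) : (c • M).charpoly = (c • N).charpoly := by
  apply Polynomial.funext
  intro x
  have key : ∀ A : Matrix (Fin d) (Fin d) ℂ,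
      (c • A).charpoly.eval x = c ^ d * A.charpoly.eval (x / c) := by
    intro A
    rw [stmt11_evalcp, stmt11_evalcp]
    have : x • (1 : Matrix (Fin d) (Fin d) ℂ) - c • A
        = c • ((x / c) • (1 : Matrix (Fin d) (Fin d) ℂ) - A) := by
      rw [smul_sub, smul_smul, mul_div_cancel₀ _ hc]
    rw [this, Matrix.det_smul, Fintype.card_fin]
  rw [key, key, h]

private lemma stmt11_herm_qf_real {d : ℕ} {K : Matrix (Fin d) (Fin d) ℂ} (hK : K.IsHermitian)
    (x : Fin d → ℂ) : star (star x ⬝ᵥ K *ᵥ x) = star x ⬝ᵥ K *ᵥ x := by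
  rw [← star_dotProduct, star_mulVec, ← dotProduct_mulVec, hK.eq]

private lemma stmt11_qf_bound {d : ℕ} (K : Matrix (Fin d) (Fin d) ℂ) (x : Fin d → ℂ) :
    ‖star x ⬝ᵥ K *ᵥ x‖ ≤
      (∑ i, ∑ j, ‖K i j‖) * (∑ i, ‖x i‖ ^ 2) := by
  classical
  have hn : ∀ i : Fin d, ‖x i‖ ^ 2 ≤ ∑ k, ‖x k‖ ^ 2 :=
    fun i => Finset.single_le_sum (f := fun k => ‖x k‖ ^ 2)
      (fun k _ => by positivity) (Finset.mem_univ i)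
  set n := ∑ k, ‖x k‖ ^ 2 with hndef
  have hqexp : star x ⬝ᵥ K *ᵥ x = ∑ i, ∑ j, star (x i) * K i j * x j := by
    simp [dotProduct, mulVec, Finset.mul_sum, mul_assoc]
  rw [hqexp]
  calc ‖∑ i, ∑ j, star (x i) * K i j * x j‖
      ≤ ∑ i, ‖∑ j, star (x i) * K i j * x j‖ := norm_sum_le _ _
    _ ≤ ∑ i, ∑ j, ‖star (x i) * K i j * x j‖ :=
        Finset.sum_le_sum (fun i _ => norm_sum_le _ _)
    _ ≤ ∑ i, ∑ j, ‖K i j‖ * n := by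
        refine Finset.sum_le_sum fun i _ => Finset.sum_le_sum fun j _ => ?_
        have habs : ‖star (x i)‖ = ‖x i‖ := by
          simp
        rw [norm_mul, norm_mul, habs]
        have h1 : ‖x i‖ * ‖x j‖ ≤ n := by
          nlinarith [hn i, hn j, sq_nonneg (‖x i‖ - ‖x j‖),
            norm_nonneg (x i), norm_nonneg (x j)]
        have h2 : (0:ℝ) ≤ ‖K i j‖ := norm_nonneg _
        calc ‖x i‖ * ‖K i j‖ * ‖x j‖
            = ‖K i j‖ * (‖x i‖ * ‖x j‖) := by ring
          _ ≤ ‖K i j‖ * n := mul_le_mul_of_nonneg_left h1 h2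
    _ = (∑ i, ∑ j, ‖K i j‖) * n := by
        rw [Finset.sum_mul]
        exact Finset.sum_congr rfl fun i _ => (Finset.sum_mul _ _ _).symm

private lemma stmt11_psd_pert {d : ℕ} {K : Matrix (Fin d) (Fin d) ℂ} (hK : K.IsHermitian) (s : ℝ)
    (hs : 0 ≤ s) (hsT : s * (∑ i, ∑ j, ‖K i j‖) ≤ (d:ℝ)⁻¹) :
    ((d:ℂ)⁻¹ • (1 : Matrix (Fin d) (Fin d) ℂ) + (s:ℂ) • K).PosSemidef := by
  rw [posSemidef_iff_dotProduct_mulVec]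
  constructor
  · unfold Matrix.IsHermitian
    rw [conjTranspose_add, conjTranspose_smul, conjTranspose_smul, conjTranspose_one, hK.eq]
    norm_num
  · intro x
    set T := ∑ i, ∑ j, ‖K i j‖ with hT
    set n := ∑ i, ‖x i‖ ^ 2 with hn
    have hn0 : 0 ≤ n := Finset.sum_nonneg fun i _ => by positivity
    set q := star x ⬝ᵥ K *ᵥ x with hq
    have hsplit : star x ⬝ᵥ ((d:ℂ)⁻¹ • (1 : Matrix (Fin d) (Fin d) ℂ) + (s:ℂ) • K) *ᵥ x
        = (d:ℂ)⁻¹ * (star x ⬝ᵥ x) + (s:ℂ) * q := by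
      rw [add_mulVec, dotProduct_add, smul_mulVec, smul_mulVec, one_mulVec,
        dotProduct_smul, dotProduct_smul, smul_eq_mul, smul_eq_mul]
    have hxx : star x ⬝ᵥ x = (n : ℂ) := by
      rw [hn]
      push_cast
      refine Finset.sum_congr rfl fun i _ => ?_
      simp [mul_comm, Complex.mul_conj, ← Complex.ofReal_pow, Complex.sq_norm]
    have hqre : q = ((q.re : ℝ) : ℂ) := by
      have := stmt11_herm_qf_real hK x
      rw [← hq] at this
      exact (Complex.conj_eq_iff_re.mp this).symm
    have hb : |q.re| ≤ T * n := le_trans (Complex.abs_re_le_norm q) (stmt11_qf_bound K x)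
    rw [hsplit, hxx, hqre]
    have : (d:ℂ)⁻¹ * (n:ℂ) + (s:ℂ) * ((q.re : ℝ) : ℂ) = (((d:ℝ)⁻¹ * n + s * q.re : ℝ) : ℂ) := by
      push_cast; ring
    rw [this]
    rw [Complex.zero_le_real]
    nlinarith [mul_le_mul_of_nonneg_right hsT hn0, mul_le_mul_of_nonneg_left hb hs,
      abs_le.mp hb, neg_abs_le q.re, mul_le_mul_of_nonneg_left (neg_abs_le q.re) hs]

/-- **Final Remark of Section 4 of the paper.** A ℂ-linear map on `M_d(ℂ)`
preserves the characteristic polynomial of every density matrix iff it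
preserves the characteristic polynomial of every matrix. -/
theorem stmt_11 (d : ℕ) (hd : 1 ≤ d)
    (Λ : Matrix (Fin d) (Fin d) ℂ →ₗ[ℂ] Matrix (Fin d) (Fin d) ℂ) :
    (∀ ρ : Matrix (Fin d) (Fin d) ℂ, ρ.PosSemidef → ρ.trace = 1 →
      (Λ ρ).charpoly = ρ.charpoly) ↔
    (∀ A : Matrix (Fin d) (Fin d) ℂ, (Λ A).charpoly = A.charpoly) := by
  constructor
  · intro h
    have hd0 : (d:ℝ) ≠ 0 := Nat.cast_ne_zero.mpr (by omega)
    have hdC : (d:ℂ) ≠ 0 := Nat.cast_ne_zero.mpr (by omega)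
    -- Step 1: Hermitian trace-one matrices
    have step1 : ∀ M : Matrix (Fin d) (Fin d) ℂ, M.IsHermitian → M.trace = 1 →
        (Λ M).charpoly = M.charpoly := by
      intro M hM htr
      have hBh : ((d:ℂ)⁻¹ • (1 : Matrix (Fin d) (Fin d) ℂ)).IsHermitian := by
        unfold Matrix.IsHermitian
        rw [conjTranspose_smul, conjTranspose_one]
        norm_num
      obtain ⟨C, hCh, hMC, hCtr⟩ : ∃ C : Matrix (Fin d) (Fin d) ℂ, C.IsHermitian ∧
          (d:ℂ)⁻¹ • (1 : Matrix (Fin d) (Fin d) ℂ) + C = M ∧ C.trace = 0 := by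
        refine ⟨M - (d:ℂ)⁻¹ • (1 : Matrix (Fin d) (Fin d) ℂ), hM.sub hBh, by abel, ?_⟩
        rw [trace_sub, htr, trace_smul, trace_one]
        simp only [Fintype.card_fin, smul_eq_mul]
        field_simp
        norm_num
      set T := ∑ i, ∑ j, ‖C i j‖ with hT
      have hT0 : 0 ≤ T := Finset.sum_nonneg fun i _ => Finset.sum_nonneg fun j _ =>
        norm_nonneg _
      set ε : ℝ := (d:ℝ)⁻¹ / (T + 1) with hε
      have hε0 : 0 < ε := by
        apply div_pos
        · exact inv_pos.mpr (by positivity)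
        · linarith
      set S : Set ℂ := (fun s : ℝ => (s:ℂ)) '' (Set.Ioo 0 ε) with hS
      have hSinf : S.Infinite :=
        (Set.Ioo_infinite hε0).image (Complex.ofReal_injective.injOn)
      have hmem : ∀ t ∈ S,
          (Λ ((d:ℂ)⁻¹ • (1 : Matrix (Fin d) (Fin d) ℂ) + t • C)).charpoly
            = ((d:ℂ)⁻¹ • (1 : Matrix (Fin d) (Fin d) ℂ) + t • C).charpoly := by
        rintro t ⟨s, ⟨hs0, hsε⟩, rfl⟩
        apply h
        · exact stmt11_psd_pert hCh s (le_of_lt hs0) (by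
            calc s * T ≤ ε * (T + 1) :=
                  mul_le_mul (le_of_lt hsε) (by linarith) hT0 (le_of_lt hε0)
              _ = (d:ℝ)⁻¹ := by rw [hε, div_mul_cancel₀]; linarith)
        · rw [trace_add, trace_smul, trace_smul, trace_one, hCtr]
          simp only [Fintype.card_fin, smul_eq_mul, mul_zero, add_zero]
          field_simp
      have hline := stmt11_line Λ ((d:ℂ)⁻¹ • (1 : Matrix (Fin d) (Fin d) ℂ)) C S hSinf hmem 1
      rw [one_smul, hMC] at hline
      exact hline
    -- Step 2: all trace-one matrices
    have step2 : ∀ M : Matrix (Fin d) (Fin d) ℂ, M.trace = 1 →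
        (Λ M).charpoly = M.charpoly := by
      intro M htr
      obtain ⟨H, K, hHh, hKh, htrH, htrK, hMHK⟩ :
          ∃ H K : Matrix (Fin d) (Fin d) ℂ, H.IsHermitian ∧ K.IsHermitian ∧
            H.trace = 1 ∧ K.trace = 0 ∧ H + Complex.I • K = M := by
        refine ⟨(2:ℂ)⁻¹ • (M + Mᴴ), (-(Complex.I)/2) • (M - Mᴴ), ?_, ?_, ?_, ?_, ?_⟩
        · unfold Matrix.IsHermitian
          rw [conjTranspose_smul, conjTranspose_add, conjTranspose_conjTranspose]
          rw [show star ((2:ℂ)⁻¹) = (2:ℂ)⁻¹ by norm_num, add_comm]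
        · unfold Matrix.IsHermitian
          rw [conjTranspose_smul, conjTranspose_sub, conjTranspose_conjTranspose]
          have h1 : star (-(Complex.I)/2) = Complex.I/2 := by
            simp [Complex.ext_iff]
          rw [h1, ← neg_sub M Mᴴ, smul_neg, ← neg_smul]
          congr 1
          ring
        · rw [trace_smul, trace_add, trace_conjTranspose, htr]
          norm_num
        · rw [trace_smul, trace_sub, trace_conjTranspose, htr]
          norm_num
        · ext i j
          simp only [Matrix.add_apply, Matrix.smul_apply, Matrix.sub_apply, smul_eq_mul]
          have hI : Complex.I * Complex.I = -1 := Complex.I_mul_I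
          field_simp
          rw [conjTranspose_apply, Complex.star_def, Complex.I_sq]
          ring
      have hreal : ∀ s : ℝ, ((s:ℂ) • K).IsHermitian := by
        intro s
        unfold Matrix.IsHermitian
        rw [conjTranspose_smul, hKh.eq]
        congr 1
        simp
      set S : Set ℂ := Set.range (fun s : ℝ => (s:ℂ)) with hS
      have hSinf : S.Infinite := Set.infinite_range_of_injective Complex.ofReal_injective
      have hmem : ∀ t ∈ S, (Λ (H + t • K)).charpoly = (H + t • K).charpoly := by
        rintro t ⟨s, rfl⟩
        apply step1
        · exact hHh.add (hreal s)
        · rw [trace_add, trace_smul, htrH, htrK]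
          simp
      have hline := stmt11_line Λ H K S hSinf hmem Complex.I
      rwa [hMHK] at hline
    -- Step 3: nonzero-trace matrices
    have step3 : ∀ M : Matrix (Fin d) (Fin d) ℂ, M.trace ≠ 0 →
        (Λ M).charpoly = M.charpoly := by
      intro M htr
      set c := M.trace with hc
      have h1 : ((c⁻¹ : ℂ) • M).trace = 1 := by
        rw [trace_smul, smul_eq_mul, inv_mul_cancel₀ htr]
      have h2 := step2 _ h1
      have h3 := stmt11_scalecp c htr _ _ h2
      have h4 : c • Λ (c⁻¹ • M) = Λ M := by
        rw [← LinearMap.map_smul, smul_smul, mul_inv_cancel₀ htr, one_smul]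
      have h5 : c • (c⁻¹ • M) = M := by
        rw [smul_smul, mul_inv_cancel₀ htr, one_smul]
      rwa [h4, h5] at h3
    -- Step 4: all matrices
    intro A
    set S : Set ℂ := {t : ℂ | A.trace + t * d = 0}ᶜ with hS
    have hSinf : S.Infinite := by
      apply Set.Finite.infinite_compl
      have hsub : {t : ℂ | A.trace + t * d = 0} ⊆ {-(A.trace) / d} := by
        intro t ht
        simp only [Set.mem_setOf_eq] at ht
        simp only [Set.mem_singleton_iff]
        field_simp
        linear_combination ht
      exact Set.Finite.subset (Set.finite_singleton _) hsub
    have hmem : ∀ t ∈ S, (Λ (A + t • 1)).charpoly = (A + t • 1).charpoly := by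
      intro t ht
      apply step3
      rw [trace_add, trace_smul, trace_one]
      simpa [hS, Fintype.card_fin] using ht
    have := stmt11_line Λ A 1 S hSinf hmem 0
    simpa using this
  · intro h ρ _ _
    exact h ρ
end

section
/- Let d_A, d_B ≥ 1 and let Λ : M_{d_B}(ℂ) → M_{d_B}(ℂ) be a ℂ-linear map such that the characteristic polynomial of Λ(A) equals that of A for every matrix A ∈ M_{d_B}(ℂ). Let I⊗Λ denote the blockwise extension of Λ to matrices indexed by (Fin d_A × Fin d_B). Then either for every matrix A indexed by (Fin d_A × Fin d_B) the characteristic polynomial of (I⊗Λ)(A) equals that of A, or for every such matrix A the characteristic polynomial of (I⊗Λ)(A) equals that of the partial transpose (I⊗T)(A) defined by ((I⊗T)M)((i,k),(j,l)) = M((i,l),(j,k)). -/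
open Matrix

/-- Blockwise extension `I ⊗ Λ` of a map `Λ` on `d_B × d_B` matrices to
matrices indexed by `Fin d_A × Fin d_B`:
`((I⊗Λ)M)((i,k),(j,l)) = Λ(M_{ij})(k,l)` where `M_{ij}` is the block
`(k,l) ↦ M((i,k),(j,l))`. -/
def blockExt (dA dB : ℕ)
    (Λ : Matrix (Fin dB) (Fin dB) ℂ → Matrix (Fin dB) (Fin dB) ℂ)
    (M : Matrix (Fin dA × Fin dB) (Fin dA × Fin dB) ℂ) :
    Matrix (Fin dA × Fin dB) (Fin dA × Fin dB) ℂ :=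
  Matrix.of fun p q =>
    Λ (Matrix.of fun k l => M (p.1, k) (q.1, l)) p.2 q.2

/-- Partial transposition `I ⊗ T`:
`((I⊗T)M)((i,k),(j,l)) = M((i,l),(j,k))`. -/
def partialTranspose (dA dB : ℕ)
    (M : Matrix (Fin dA × Fin dB) (Fin dA × Fin dB) ℂ) :
    Matrix (Fin dA × Fin dB) (Fin dA × Fin dB) ℂ :=
  Matrix.of fun p q => M (p.1, q.2) (q.1, p.2)

/-! ### Auxiliary material -/

set_option linter.unusedSectionVars false
set_option maxHeartbeats 1000000

open Polynomial Kronecker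

section Aux

variable {n : Type*} [Fintype n] [DecidableEq n]

lemma MM.eval_cp (M : Matrix n n ℂ) (z : ℂ) :
    (M.charpoly).eval z = (z • (1 : Matrix n n ℂ) - M).det := by
  rw [Matrix.charpoly, ← Polynomial.coe_evalRingHom, RingHom.map_det]
  congr 1
  ext i j
  by_cases h : i = j <;>
  simp [h, Matrix.charmatrix_apply, Matrix.one_apply, Matrix.diagonal_apply,
    RingHom.mapMatrix_apply, Matrix.map_apply]

lemma MM.fact2 (M : Matrix n n ℂ) (a b : ℂ) :
    (a • (1 : Matrix n n ℂ) - M) * (b • 1 - M) = (a*b) • 1 - (a+b) • M + M*M := by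
  simp only [sub_mul, mul_sub, Matrix.smul_mul, Matrix.mul_smul, one_mul, mul_one]
  module

lemma MM.fact3 (M : Matrix n n ℂ) (a b c : ℂ) :
    (a • (1 : Matrix n n ℂ) - M) * ((b • 1 - M) * (c • 1 - M))
      = (a*b*c) • 1 - (a*b + a*c + b*c) • M + (a+b+c) • (M*M) - M*M*M := by
  simp only [sub_mul, mul_sub, Matrix.smul_mul, Matrix.mul_smul, one_mul, mul_one, mul_assoc]
  module

lemma MM.charpoly_sq {M N : Matrix n n ℂ} (h : M.charpoly = N.charpoly) :
    (M*M).charpoly = (N*N).charpoly := by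
  apply Polynomial.funext
  intro z
  obtain ⟨ζ, hζ⟩ := IsAlgClosed.exists_pow_nat_eq z (n := 2) (by norm_num)
  have key : ∀ P : Matrix n n ℂ, z • (1 : Matrix n n ℂ) - P*P
      = -((ζ • 1 - P) * ((-ζ) • 1 - P)) := by
    intro P
    rw [MM.fact2]
    rw [show ζ * -ζ = -z by rw [← hζ]; ring]
    simp
    abel
  have e : ∀ P : Matrix n n ℂ, (P*P).charpoly.eval z
      = (-1)^(Fintype.card n) * (P.charpoly.eval ζ * P.charpoly.eval (-ζ)) := by
    intro P
    rw [MM.eval_cp, key, Matrix.det_neg, Matrix.det_mul, ← MM.eval_cp, ← MM.eval_cp]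
  rw [e, e, h]

lemma MM.charpoly_cube {M N : Matrix n n ℂ} (h : M.charpoly = N.charpoly) :
    (M*M*M).charpoly = (N*N*N).charpoly := by
  obtain ⟨ω, hω⟩ : ∃ ω : ℂ, ω^2 + ω + 1 = 0 := by
    obtain ⟨x, hx⟩ := IsAlgClosed.exists_root (k := ℂ) (X^2 + X + 1) (by
      have hd : (X^2 + X + 1 : ℂ[X]).degree = 2 := by compute_degree!
      rw [hd]; norm_num)
    exact ⟨x, by simpa [Polynomial.IsRoot] using hx⟩
  have hω3 : ω^3 = 1 := by linear_combination (ω - 1) * hω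
  apply Polynomial.funext
  intro z
  obtain ⟨ζ, hζ⟩ := IsAlgClosed.exists_pow_nat_eq z (n := 3) (by norm_num)
  have key : ∀ P : Matrix n n ℂ, z • (1 : Matrix n n ℂ) - P*P*P
      = (ζ • 1 - P) * (((ζ*ω) • 1 - P) * ((ζ*ω^2) • 1 - P)) := by
    intro P
    rw [MM.fact3]
    rw [show ζ * (ζ*ω) * (ζ*ω^2) = z by linear_combination ζ^3 * hω3 + hζ,
      show ζ * (ζ*ω) + ζ * (ζ*ω^2) + (ζ*ω) * (ζ*ω^2) = 0 by linear_combination ζ^2*ω*hω,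
      show ζ + ζ*ω + ζ*ω^2 = 0 by linear_combination ζ*hω]
    simp [mul_assoc]
  have e : ∀ P : Matrix n n ℂ, (P*P*P).charpoly.eval z
      = P.charpoly.eval ζ * (P.charpoly.eval (ζ*ω) * P.charpoly.eval (ζ*ω^2)) := by
    intro P
    rw [MM.eval_cp, key, Matrix.det_mul, Matrix.det_mul, ← MM.eval_cp, ← MM.eval_cp, ← MM.eval_cp]
  rw [e, e, h]

lemma MM.trace_eq [Nonempty n] {M N : Matrix n n ℂ} (h : M.charpoly = N.charpoly) :
    M.trace = N.trace := by
  rw [Matrix.trace_eq_neg_charpoly_coeff, Matrix.trace_eq_neg_charpoly_coeff, h]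

lemma MM.cyc (a b c : Matrix n n ℂ) : trace (a*(b*c)) = trace (c*(a*b)) := by
  rw [← mul_assoc, trace_mul_comm]

lemma MM.tr_entry (A : Matrix n n ℂ) (i j : n) :
    trace (A * Matrix.single j i 1) = A i j := by
  classical
  rw [Matrix.trace, Finset.sum_eq_single i]
  · simp [Matrix.diag]
  · intro b _ hb
    simp [Matrix.diag, Matrix.mul_single_apply_of_ne, hb]
  · simp

lemma MM.eq_zero_of_trace_mul {A : Matrix n n ℂ} (h : ∀ B, trace (A * B) = 0) : A = 0 := by
  ext i j
  simpa [MM.tr_entry] using h (Matrix.single j i 1)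

lemma MM.prime {u v : Matrix n n ℂ} (h : ∀ x, u * x * v = 0) : u = 0 ∨ v = 0 := by
  by_cases hu : u = 0
  · exact Or.inl hu
  · right
    obtain ⟨i, k, hik⟩ : ∃ i k, u i k ≠ 0 := by
      by_contra hc
      push_neg at hc
      exact hu (by ext i k; simpa using hc i k)
    ext l j
    have h0 := congrArg (fun M => M i j) (h (Matrix.single k l 1))
    simp only [Matrix.mul_apply, Matrix.single, Matrix.zero_apply, Matrix.of_apply] at h0
    simp only [ite_and, mul_ite, ite_mul, mul_one, one_mul, mul_zero, zero_mul, Finset.sum_ite_eq,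
      Finset.mem_univ, if_true, Finset.sum_ite_irrel, Finset.sum_const_zero] at h0
    simp only [Matrix.zero_apply]
    rcases mul_eq_zero.mp h0 with h1 | h1
    · exact absurd h1 hik
    · exact h1

lemma MM.union_trick {α M : Type*} [AddCommGroup α] [AddCommGroup M]
    (f g : α → M) (hf : ∀ x y, f (x+y) = f x + f y) (hg : ∀ x y, g (x+y) = g x + g y)
    (h : ∀ x, f x = 0 ∨ g x = 0) : (∀ x, f x = 0) ∨ (∀ x, g x = 0) := by
  by_contra hc
  push_neg at hc
  obtain ⟨⟨x, hx⟩, ⟨y, hy⟩⟩ := hc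
  have hgx : g x = 0 := (h x).resolve_left hx
  have hfy : f y = 0 := (h y).resolve_right hy
  rcases h (x + y) with h1 | h1
  · rw [hf, hfy, add_zero] at h1
    exact hx h1
  · rw [hg, hgx, zero_add] at h1
    exact hy h1

end Aux

section Lam

variable {n : Type*} [Fintype n] [DecidableEq n]
variable (Λ : Matrix n n ℂ →ₗ[ℂ] Matrix n n ℂ)

lemma MM.horth (htr2 : ∀ A : Matrix n n ℂ, trace (Λ A * Λ A) = trace (A * A))
    (A B : Matrix n n ℂ) : trace (Λ A * Λ B) = trace (A * B) := by
  have h := htr2 (A + B)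
  simp only [map_add, add_mul, mul_add, trace_add] at h
  have c1 := trace_mul_comm (Λ B) (Λ A)
  have c2 := trace_mul_comm B A
  linear_combination (h - htr2 A - htr2 B - c1 + c2) / 2

lemma MM.hq (htr3 : ∀ A : Matrix n n ℂ, trace (Λ A * Λ A * Λ A) = trace (A * A * A))
    (A B : Matrix n n ℂ) :
    trace (Λ A * Λ A * Λ B) + trace (Λ A * (Λ B * Λ B))
      = trace (A * A * B) + trace (A * (B * B)) := by
  have h := htr3 (A + B)
  simp only [map_add, add_mul, mul_add, trace_add, mul_assoc] at h
  have hA := htr3 A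
  have hB := htr3 B
  simp only [mul_assoc] at hA hB ⊢
  rw [MM.cyc (Λ B) (Λ A) (Λ A), MM.cyc (Λ A) (Λ B) (Λ A), MM.cyc (Λ B) (Λ A) (Λ B),
    MM.cyc (Λ B) (Λ B) (Λ A), MM.cyc B A A, MM.cyc A B A, MM.cyc B A B, MM.cyc B B A] at h
  linear_combination (h - hA - hB) / 3

lemma MM.hq2 (htr3 : ∀ A : Matrix n n ℂ, trace (Λ A * Λ A * Λ A) = trace (A * A * A))
    (A C B : Matrix n n ℂ) :
    trace (Λ A * Λ C * Λ B) + trace (Λ C * Λ A * Λ B)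
      = trace (A * C * B) + trace (C * A * B) := by
  have h := MM.hq Λ htr3 (A + C) B
  have h1 := MM.hq Λ htr3 A B
  have h2 := MM.hq Λ htr3 C B
  simp only [map_add, add_mul, mul_add, trace_add, mul_assoc] at h h1 h2 ⊢
  linear_combination h - h1 - h2

lemma MM.hinj (horth : ∀ A B : Matrix n n ℂ, trace (Λ A * Λ B) = trace (A * B)) :
    Function.Injective Λ := by
  rw [← LinearMap.ker_eq_bot, LinearMap.ker_eq_bot']
  intro A hA
  apply MM.eq_zero_of_trace_mul
  intro B
  rw [← horth A B, hA, zero_mul, trace_zero]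

lemma MM.hsurj (horth : ∀ A B : Matrix n n ℂ, trace (Λ A * Λ B) = trace (A * B)) :
    Function.Surjective Λ :=
  (LinearMap.injective_iff_surjective).mp (MM.hinj Λ horth)

lemma MM.hJordan (horth : ∀ A B : Matrix n n ℂ, trace (Λ A * Λ B) = trace (A * B))
    (hq2 : ∀ A C B : Matrix n n ℂ,
      trace (Λ A * Λ C * Λ B) + trace (Λ C * Λ A * Λ B)
        = trace (A * C * B) + trace (C * A * B))
    (a b : Matrix n n ℂ) :
    Λ (a * b + b * a) = Λ a * Λ b + Λ b * Λ a := by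
  have key : ∀ X, trace ((Λ (a * b + b * a) - (Λ a * Λ b + Λ b * Λ a)) * X) = 0 := by
    intro X
    obtain ⟨Y, rfl⟩ := MM.hsurj Λ horth X
    have h1 := hq2 a b Y
    have h2 := horth (a * b + b * a) Y
    simp only [map_add, add_mul, sub_mul, trace_add, trace_sub, mul_assoc] at h1 h2 ⊢
    linear_combination h2 - h1
  have h0 := MM.eq_zero_of_trace_mul key
  rw [sub_eq_zero] at h0
  exact h0

variable (hJ : ∀ a b : Matrix n n ℂ, Λ (a * b + b * a) = Λ a * Λ b + Λ b * Λ a)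

include hJ

lemma MM.hsq (a : Matrix n n ℂ) : Λ (a * a) = Λ a * Λ a := by
  have h := hJ a a
  have h2 : (2:ℂ) • Λ (a*a) = (2:ℂ) • (Λ a * Λ a) := by
    rw [two_smul, two_smul, ← map_add]
    exact h
  exact smul_right_injective _ (two_ne_zero) h2

lemma MM.haba (a b : Matrix n n ℂ) : Λ (a * b * a) = Λ a * Λ b * Λ a := by
  have h1 := hJ a (a*b + b*a)
  rw [hJ a b] at h1
  rw [show a*(a*b+b*a) + (a*b+b*a)*a = ((a*a)*b + b*(a*a)) + (a*b*a + a*b*a) from by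
    noncomm_ring] at h1
  rw [map_add, hJ (a*a) b, MM.hsq Λ hJ a, map_add] at h1
  have h2 : (2:ℂ) • Λ (a*b*a) = (2:ℂ) • (Λ a * Λ b * Λ a) := by
    rw [two_smul, two_smul]
    have expand : Λ a * (Λ a * Λ b + Λ b * Λ a) + (Λ a * Λ b + Λ b * Λ a) * Λ a
        = (Λ a * Λ a * Λ b + Λ b * (Λ a * Λ a)) + (Λ a * Λ b * Λ a + Λ a * Λ b * Λ a) := by
      noncomm_ring
    rw [expand] at h1
    exact add_left_cancel h1
  exact smul_right_injective _ (two_ne_zero) h2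

lemma MM.haxb (a x b : Matrix n n ℂ) :
    Λ (a * x * b + b * x * a) = Λ a * Λ x * Λ b + Λ b * Λ x * Λ a := by
  have h := MM.haba Λ hJ (a + b) x
  rw [show (a+b)*x*(a+b) = (a*x*a) + ((a*x*b + b*x*a) + (b*x*b)) from by noncomm_ring,
    map_add, map_add, MM.haba Λ hJ a x, MM.haba Λ hJ b x] at h
  simp only [map_add] at h
  have expand : (Λ a + Λ b) * Λ x * (Λ a + Λ b)
      = Λ a * Λ x * Λ a + ((Λ a * Λ x * Λ b + Λ b * Λ x * Λ a) + Λ b * Λ x * Λ b) := by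
    noncomm_ring
  rw [expand] at h
  rw [map_add]
  exact add_right_cancel (add_left_cancel h)

lemma MM.hJid
    (hsurj : Function.Surjective Λ)
    (a b : Matrix n n ℂ) :
    ∀ X, (Λ (a*b) - Λ a * Λ b) * X * (Λ (a*b) - Λ b * Λ a)
        + (Λ (a*b) - Λ b * Λ a) * X * (Λ (a*b) - Λ a * Λ b) = 0 := by
  intro X
  obtain ⟨x, rfl⟩ := hsurj X
  have I1 : Λ (a*b) * Λ x * Λ (b*a) + Λ (b*a) * Λ x * Λ (a*b)
      = Λ a * Λ b * Λ x * (Λ b * Λ a) + Λ b * Λ a * Λ x * (Λ a * Λ b) := by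
    have h1 := MM.haxb Λ hJ (a*b) x (b*a)
    have h2 : (a*b) * x * (b*a) + (b*a) * x * (a*b)
        = a * (b*x*b) * a + b * (a*x*a) * b := by noncomm_ring
    rw [h2, map_add, MM.haba Λ hJ a (b*x*b), MM.haba Λ hJ b (a*x*a),
      MM.haba Λ hJ b x, MM.haba Λ hJ a x] at h1
    rw [← h1]
    noncomm_ring
  have hPR : Λ (b*a) = Λ a * Λ b + Λ b * Λ a - Λ (a*b) := by
    rw [← hJ a b, map_add]
    abel
  rw [hPR] at I1
  have pure : ∀ P Q S X : Matrix n n ℂ,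
      P * X * (Q + S - P) + (Q + S - P) * X * P = Q * X * S + S * X * Q
      → (P - Q) * X * (P - S) + (P - S) * X * (P - Q) = 0 := by
    intro P Q S X h
    have hx : (P - Q) * X * (P - S) + (P - S) * X * (P - Q)
        = (Q * X * S + S * X * Q) - (P * X * (Q + S - P) + (Q + S - P) * X * P) := by
      noncomm_ring
    rw [hx, ← h, sub_self]
  apply pure
  rw [← I1]

lemma MM.herstein
    (hsurj : Function.Surjective Λ)
    (a b : Matrix n n ℂ) :
    ∀ X, (Λ (a*b) - Λ a * Λ b) * X * (Λ (a*b) - Λ b * Λ a) = 0 := by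
  set g := Λ (a*b) - Λ a * Λ b with hg
  set h := Λ (a*b) - Λ b * Λ a with hh
  have J : ∀ X, g * X * h = -(h * X * g) := by
    intro X
    have h0 := MM.hJid Λ hJ hsurj a b X
    rw [← hg, ← hh] at h0
    exact eq_neg_of_add_eq_zero_left h0
  have key : ∀ x y, h * x * (g * y * h) = 0 := by
    intro x y
    have A1 := J (x*h*y)
    have A2 : g*x*h*y*h = -(h*x*g)*y*h := by rw [J x]
    have A3 : h*x*h*y*g = h*x*g*y*h := by
      have e1 : g*(x*h*y)*h = g*x*h*y*h := by noncomm_ring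
      rw [e1, A2] at A1
      have e2 : -(h*(x*h*y)*g) = -(h*x*h*y*g) := by noncomm_ring
      have e3 : -(h*x*g)*y*h = -(h*x*g*y*h) := by noncomm_ring
      rw [e2, e3] at A1
      exact neg_injective A1.symm
    have hy := J y
    have C : (2:ℂ) • (h*x*(g*y*h)) = 0 := by
      calc (2:ℂ) • (h*x*(g*y*h)) = h*x*g*y*h - h*x*(-(g*y*h)) := by
            rw [two_smul]; noncomm_ring
        _ = h*x*g*y*h - h*x*(h*y*g) := by rw [hy, neg_neg]
        _ = h*x*g*y*h - h*x*h*y*g := by noncomm_ring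
        _ = 0 := by rw [A3, sub_self]
    have hres := smul_right_injective (Matrix n n ℂ) (two_ne_zero (α := ℂ)) (by
      rw [C, smul_zero] : (2:ℂ) • (h*x*(g*y*h)) = (2:ℂ) • (0 : Matrix n n ℂ))
    exact hres
  intro X
  rcases MM.prime (fun x => key x X) with h0 | h0
  · rw [h0, mul_zero]
  · exact h0

omit hJ

lemma MM.uniform
    (hdich : ∀ a b : Matrix n n ℂ, Λ (a*b) = Λ a * Λ b ∨ Λ (a*b) = Λ b * Λ a) :
    (∀ a b : Matrix n n ℂ, Λ (a*b) = Λ a * Λ b) ∨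
    (∀ a b : Matrix n n ℂ, Λ (a*b) = Λ b * Λ a) := by
  have inner : ∀ a : Matrix n n ℂ,
      (∀ b, Λ (a*b) - Λ a * Λ b = 0) ∨ (∀ b, Λ (a*b) - Λ b * Λ a = 0) := by
    intro a
    have res := MM.union_trick (fun b => Λ (a*b) - Λ a * Λ b) (fun b => Λ (a*b) - Λ b * Λ a)
      (by intro x y; simp [mul_add, map_add]; abel)
      (by intro x y; simp [mul_add, add_mul, map_add]; abel)
      (by intro b; rcases hdich a b with h | h
          · exact Or.inl (by show Λ (a*b) - _ = 0; rw [h, sub_self])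
          · exact Or.inr (by show Λ (a*b) - _ = 0; rw [h, sub_self]))
    exact res
  have outer := MM.union_trick
    (fun a => (fun b => Λ (a*b) - Λ a * Λ b : Matrix n n ℂ → Matrix n n ℂ))
    (fun a => (fun b => Λ (a*b) - Λ b * Λ a : Matrix n n ℂ → Matrix n n ℂ))
    (by intro x y; funext b; simp [add_mul, map_add]; abel)
    (by intro x y; funext b; simp [add_mul, mul_add, map_add]; abel)
    (by intro a
        rcases inner a with h | h
        · exact Or.inl (funext h)
        · exact Or.inr (funext h))
  rcases outer with h | h
  · left; intro a b
    have h2 := congrFun (h a) b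
    simpa [sub_eq_zero] using h2
  · right; intro a b
    have h2 := congrFun (h a) b
    simpa [sub_eq_zero] using h2

end Lam

section Skolem

variable {n : Type*} [Fintype n] [DecidableEq n] [Nonempty n]

/-- Skolem–Noether for matrix algebras: an injective linear multiplicative map
is conjugation by an invertible matrix. -/
lemma MM.skolem (μ : Matrix n n ℂ →ₗ[ℂ] Matrix n n ℂ)
    (hmul : ∀ a b : Matrix n n ℂ, μ (a*b) = μ a * μ b)
    (hinj : Function.Injective μ) :
    ∃ S : (Matrix n n ℂ)ˣ, ∀ X,
      μ X = (S : Matrix n n ℂ) * X * ((S⁻¹ : (Matrix n n ℂ)ˣ) : Matrix n n ℂ) := by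
  classical
  obtain ⟨i0⟩ := ‹Nonempty n›
  set e := μ (Matrix.single i0 i0 1) with he
  have hee : e * e = e := by
    rw [he, ← hmul, Matrix.single_mul_single_same, mul_one]
  have hene : e ≠ 0 := by
    intro h0
    have h1 : Matrix.single i0 i0 (1:ℂ) = 0 := by
      apply hinj
      rw [map_zero, ← he]
      exact h0
    have := congrFun (congrFun h1 i0) i0
    simp [Matrix.single] at this
  obtain ⟨v0, hv0⟩ : ∃ v0, e *ᵥ v0 ≠ 0 := by
    by_contra hc
    push_neg at hc
    apply hene
    ext i j
    have := congrFun (hc (Pi.single j 1)) i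
    simpa using this
  set v := e *ᵥ v0 with hv
  have hev : e *ᵥ v = v := by rw [hv, mulVec_mulVec, hee]
  set S : Matrix n n ℂ := Matrix.of fun i j => (μ (Matrix.single j i0 1) *ᵥ v) i with hS
  have hcomm : ∀ X, μ X * S = S * X := by
    intro X
    ext i j
    have lhs : (μ X * S) i j = ((μ X * μ (Matrix.single j i0 1)) *ᵥ v) i := by
      simp only [Matrix.mul_apply, hS, Matrix.of_apply, Matrix.mulVec, dotProduct,
        Finset.mul_sum, Finset.sum_mul]
      rw [Finset.sum_comm]
      exact Finset.sum_congr rfl fun m _ => Finset.sum_congr rfl fun l _ => by ring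
    have rhs : (S * X) i j = (μ (X * Matrix.single j i0 1) *ᵥ v) i := by
      have harg : X * Matrix.single j i0 1 = ∑ m : n, X m j • Matrix.single m i0 1 := by
        ext a b
        simp only [Matrix.mul_apply, Matrix.single, Matrix.of_apply, Matrix.sum_apply,
          Matrix.smul_apply, smul_eq_mul, mul_ite, mul_one, mul_zero, ite_and,
          Finset.sum_ite_eq, Finset.sum_ite_eq', Finset.mem_univ, if_true,
          Finset.sum_ite_irrel, Finset.sum_const_zero]
      rw [harg, map_sum]
      simp only [_root_.map_smul]
      simp only [Matrix.mul_apply, hS, Matrix.of_apply, Matrix.mulVec, dotProduct,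
        Matrix.sum_apply, Finset.sum_apply, Matrix.smul_apply, smul_eq_mul, Finset.sum_mul,
        Finset.mul_sum]
      rw [Finset.sum_comm]
      exact Finset.sum_congr rfl fun m _ => Finset.sum_congr rfl fun l _ => by ring
    rw [lhs, rhs, ← hmul]
  have hSne : S ≠ 0 := by
    intro h0
    apply hv0
    have hcol : ∀ i, S i i0 = v i := by
      intro i
      rw [hS]
      simp only [Matrix.of_apply]
      rw [← he, hev]
    ext i
    rw [← hcol i, h0]
    simp
  have hker : ∀ w, S *ᵥ w = 0 → w = 0 := by
    intro w hw
    by_contra hwne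
    obtain ⟨k, hk⟩ : ∃ k, w k ≠ 0 := by
      by_contra hc; push_neg at hc; exact hwne (funext hc)
    apply hSne
    have hall : ∀ u : n → ℂ, S *ᵥ u = 0 := by
      intro u
      set X : Matrix n n ℂ := Matrix.of fun i j => if j = k then u i / w k else 0 with hX
      have hXw : X *ᵥ w = u := by
        ext i
        simp only [hX, Matrix.mulVec, dotProduct, Matrix.of_apply, ite_mul, zero_mul,
          Finset.sum_ite_eq', Finset.mem_univ, if_true]
        field_simp
      calc S *ᵥ u = S *ᵥ (X *ᵥ w) := by rw [hXw]
        _ = (S * X) *ᵥ w := by rw [mulVec_mulVec]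
        _ = (μ X * S) *ᵥ w := by rw [hcomm]
        _ = μ X *ᵥ (S *ᵥ w) := by rw [mulVec_mulVec]
        _ = 0 := by rw [hw, mulVec_zero]
    ext i j
    have := congrFun (hall (Pi.single j 1)) i
    simpa using this
  have hsurjv : ∀ u : n → ℂ, ∃ w, S *ᵥ w = u := by
    have hinjv : Function.Injective S.mulVecLin := by
      intro w1 w2 h12
      have h0 : S *ᵥ (w1 - w2) = 0 := by
        rw [mulVec_sub]
        simp only [Matrix.mulVecLin_apply] at h12
        rw [h12, sub_self]
      exact sub_eq_zero.mp (hker _ h0)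
    have hsurj := LinearMap.surjective_of_injective hinjv
    intro u
    obtain ⟨w, hw⟩ := hsurj u
    exact ⟨w, by simpa [Matrix.mulVecLin_apply] using hw⟩
  choose t ht using fun j => hsurjv (Pi.single j 1)
  set T : Matrix n n ℂ := Matrix.of fun i j => t j i with hT
  have hST : S * T = 1 := by
    ext i j
    have hcolj := congrFun (ht j) i
    simp only [Matrix.mulVec, dotProduct] at hcolj
    simp only [Matrix.mul_apply, hT, Matrix.of_apply, Matrix.one_apply]
    rw [hcolj]
    by_cases hij : i = j
    · subst hij; simp
    · simp [Pi.single_apply, hij]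
  have hunit : IsUnit S := by
    rw [Matrix.isUnit_iff_isUnit_det]
    have hdet : S.det * T.det = 1 := by rw [← det_mul, hST, det_one]
    exact IsUnit.of_mul_eq_one _ hdet
  obtain ⟨U, hU⟩ := hunit
  refine ⟨U, fun X => ?_⟩
  have hc := hcomm X
  calc μ X = μ X * ((U : Matrix n n ℂ) * ↑U⁻¹) := by rw [Units.mul_inv, mul_one]
    _ = (μ X * ↑U) * ↑U⁻¹ := by rw [mul_assoc]
    _ = (↑U * X) * ↑U⁻¹ := by rw [hU, hc, ← hU]

/-- Marcus–Moyls: a linear map preserving characteristic polynomials is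
`X ↦ S X S⁻¹` or `X ↦ S Xᵀ S⁻¹`. -/
lemma MM.marcusMoyls (Λ : Matrix n n ℂ →ₗ[ℂ] Matrix n n ℂ)
    (hΛ : ∀ A : Matrix n n ℂ, (Λ A).charpoly = A.charpoly) :
    ∃ S : (Matrix n n ℂ)ˣ,
      (∀ X, Λ X = (S : Matrix n n ℂ) * X * ((S⁻¹ : (Matrix n n ℂ)ˣ) : Matrix n n ℂ)) ∨
      (∀ X, Λ X = (S : Matrix n n ℂ) * Xᵀ * ((S⁻¹ : (Matrix n n ℂ)ˣ) : Matrix n n ℂ)) := by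
  have htr2 : ∀ A : Matrix n n ℂ, trace (Λ A * Λ A) = trace (A * A) :=
    fun A => MM.trace_eq (MM.charpoly_sq (hΛ A))
  have htr3 : ∀ A : Matrix n n ℂ, trace (Λ A * Λ A * Λ A) = trace (A * A * A) :=
    fun A => MM.trace_eq (MM.charpoly_cube (hΛ A))
  have horth := MM.horth Λ htr2
  have hq2 := MM.hq2 Λ htr3
  have hJ := MM.hJordan Λ horth hq2
  have hinj := MM.hinj Λ horth
  have hsurj := MM.hsurj Λ horth
  have hdich : ∀ a b : Matrix n n ℂ, Λ (a*b) = Λ a * Λ b ∨ Λ (a*b) = Λ b * Λ a := by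
    intro a b
    rcases MM.prime (MM.herstein Λ hJ hsurj a b) with h0 | h0
    · exact Or.inl (sub_eq_zero.mp h0)
    · exact Or.inr (sub_eq_zero.mp h0)
  rcases MM.uniform Λ hdich with hmul | hanti
  · obtain ⟨S, hS⟩ := MM.skolem Λ (fun a b => hmul a b) hinj
    exact ⟨S, Or.inl hS⟩
  · set μ : Matrix n n ℂ →ₗ[ℂ] Matrix n n ℂ :=
      { toFun := fun X => Λ Xᵀ
        map_add' := fun x y => by
          show Λ ((x+y)ᵀ) = Λ xᵀ + Λ yᵀ
          rw [Matrix.transpose_add, map_add]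
        map_smul' := fun c x => by
          show Λ ((c • x)ᵀ) = c • Λ xᵀ
          rw [Matrix.transpose_smul]
          exact map_smul Λ c xᵀ } with hμ
    have hμmul : ∀ a b : Matrix n n ℂ, μ (a*b) = μ a * μ b := by
      intro a b
      simp only [hμ, LinearMap.coe_mk, AddHom.coe_mk, Matrix.transpose_mul]
      exact hanti bᵀ aᵀ
    have hμinj : Function.Injective μ := by
      intro x y hxy
      simp only [hμ, LinearMap.coe_mk, AddHom.coe_mk] at hxy
      have := hinj hxy
      calc x = xᵀᵀ := by rw [Matrix.transpose_transpose]
        _ = yᵀᵀ := by rw [this]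
        _ = y := by rw [Matrix.transpose_transpose]
    obtain ⟨S, hS⟩ := MM.skolem μ hμmul hμinj
    refine ⟨S, Or.inr fun X => ?_⟩
    have := hS Xᵀ
    simp only [hμ, LinearMap.coe_mk, AddHom.coe_mk, Matrix.transpose_transpose] at this
    exact this

end Skolem

section Block

variable {m : Type*} [Fintype m] [DecidableEq m]

/-- charpoly is invariant under conjugation by a unit. -/
lemma MM.charpoly_conj (U : (Matrix m m ℂ)ˣ) (M : Matrix m m ℂ) :
    ((U : Matrix m m ℂ) * M * ((U⁻¹ : (Matrix m m ℂ)ˣ) : Matrix m m ℂ)).charpoly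
      = M.charpoly := by
  apply Polynomial.funext
  intro z
  set Uc : Matrix m m ℂ := (U : Matrix m m ℂ) with hUc
  set Vc : Matrix m m ℂ := ((U⁻¹ : (Matrix m m ℂ)ˣ) : Matrix m m ℂ) with hVc
  have hUV : Uc * Vc = 1 := by rw [hUc, hVc, Units.mul_inv]
  have key : z • (1 : Matrix m m ℂ) - Uc * M * Vc
      = Uc * (z • (1 : Matrix m m ℂ) - M) * Vc := by
    rw [Matrix.mul_sub, Matrix.sub_mul]
    congr 1
    rw [mul_smul_comm, Matrix.smul_mul, mul_one, hUV]
  rw [MM.eval_cp, MM.eval_cp, key, Matrix.det_mul, Matrix.det_mul]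
  have hdet1 : Uc.det * Vc.det = 1 := by
    rw [← Matrix.det_mul, hUV, Matrix.det_one]
  calc Uc.det * (z • 1 - M).det * Vc.det
      = (z • (1:Matrix m m ℂ) - M).det * (Uc.det * Vc.det) := by ring
    _ = (z • (1:Matrix m m ℂ) - M).det := by rw [hdet1, mul_one]

end Block

section BlockExt

variable {dA dB : ℕ}

lemma MM.blockExt_sandwich (S S' : Matrix (Fin dB) (Fin dB) ℂ)
    (A : Matrix (Fin dA × Fin dB) (Fin dA × Fin dB) ℂ) :
    blockExt dA dB (fun B => S * B * S') A
      = (1 ⊗ₖ S) * A * (1 ⊗ₖ S') := by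
  ext ⟨i, k⟩ ⟨j, l⟩
  simp only [blockExt, Matrix.of_apply, Matrix.mul_apply, Fintype.sum_prod_type,
    Matrix.kroneckerMap_apply, Matrix.one_apply, ite_mul, mul_ite, one_mul, zero_mul,
    mul_zero, mul_one, Finset.sum_ite_irrel, Finset.sum_const_zero, Finset.sum_ite_eq,
    Finset.sum_ite_eq', Finset.mem_univ, if_true]

lemma MM.blockExt_transpose (S S' : Matrix (Fin dB) (Fin dB) ℂ)
    (A : Matrix (Fin dA × Fin dB) (Fin dA × Fin dB) ℂ) :
    blockExt dA dB (fun B => S * Bᵀ * S') A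
      = blockExt dA dB (fun B => S * B * S') (partialTranspose dA dB A) := by
  ext ⟨i, k⟩ ⟨j, l⟩
  simp only [blockExt, Matrix.of_apply]
  congr 2

lemma MM.kron_unit (U : (Matrix (Fin dB) (Fin dB) ℂ)ˣ) :
    ∃ K : (Matrix (Fin dA × Fin dB) (Fin dA × Fin dB) ℂ)ˣ,
      (K : Matrix (Fin dA × Fin dB) (Fin dA × Fin dB) ℂ) = 1 ⊗ₖ (U : Matrix (Fin dB) (Fin dB) ℂ)
      ∧ ((K⁻¹ : (Matrix (Fin dA × Fin dB) (Fin dA × Fin dB) ℂ)ˣ)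
          : Matrix (Fin dA × Fin dB) (Fin dA × Fin dB) ℂ)
        = 1 ⊗ₖ ((U⁻¹ : (Matrix (Fin dB) (Fin dB) ℂ)ˣ) : Matrix (Fin dB) (Fin dB) ℂ) := by
  refine ⟨⟨1 ⊗ₖ (U : Matrix (Fin dB) (Fin dB) ℂ),
    1 ⊗ₖ ((U⁻¹ : (Matrix (Fin dB) (Fin dB) ℂ)ˣ) : Matrix (Fin dB) (Fin dB) ℂ), ?_, ?_⟩, rfl, rfl⟩
  · rw [← Matrix.mul_kronecker_mul, one_mul, Units.mul_inv, Matrix.one_kronecker_one]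
  · rw [← Matrix.mul_kronecker_mul, one_mul, Units.inv_mul, Matrix.one_kronecker_one]

end BlockExt

/-- **Conclusion of Section 3 of the paper.** If a ℂ-linear map `Λ` on
`M_{d_B}(ℂ)` preserves the characteristic polynomial of every matrix, then the
blockwise extension `I ⊗ Λ` either preserves the characteristic polynomial of
every matrix indexed by `Fin d_A × Fin d_B`, or maps it to that of the partial
transpose. -/
theorem stmt_12 (dA dB : ℕ) (hA : 1 ≤ dA) (hB : 1 ≤ dB)
    (Λ : Matrix (Fin dB) (Fin dB) ℂ →ₗ[ℂ] Matrix (Fin dB) (Fin dB) ℂ)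
    (hΛ : ∀ A : Matrix (Fin dB) (Fin dB) ℂ, (Λ A).charpoly = A.charpoly) :
    (∀ A : Matrix (Fin dA × Fin dB) (Fin dA × Fin dB) ℂ,
        (blockExt dA dB (fun B => Λ B) A).charpoly = A.charpoly) ∨
    (∀ A : Matrix (Fin dA × Fin dB) (Fin dA × Fin dB) ℂ,
        (blockExt dA dB (fun B => Λ B) A).charpoly =
          (partialTranspose dA dB A).charpoly) := by
  have : Nonempty (Fin dB) := ⟨⟨0, hB⟩⟩
  obtain ⟨S, hS | hS⟩ := MM.marcusMoyls Λ hΛ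
  · left
    intro A
    obtain ⟨K, hK, hKinv⟩ := MM.kron_unit (dA := dA) S
    have hfun : (fun B => Λ B) = fun B =>
        (S : Matrix (Fin dB) (Fin dB) ℂ) * B * ((S⁻¹ : (Matrix (Fin dB) (Fin dB) ℂ)ˣ)
          : Matrix (Fin dB) (Fin dB) ℂ) := funext hS
    rw [hfun, MM.blockExt_sandwich, ← hK, ← hKinv, MM.charpoly_conj]
  · right
    intro A
    obtain ⟨K, hK, hKinv⟩ := MM.kron_unit (dA := dA) S
    have hfun : (fun B => Λ B) = fun B =>
        (S : Matrix (Fin dB) (Fin dB) ℂ) * Bᵀ * ((S⁻¹ : (Matrix (Fin dB) (Fin dB) ℂ)ˣ)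
          : Matrix (Fin dB) (Fin dB) ℂ) := funext hS
    rw [hfun, MM.blockExt_transpose, MM.blockExt_sandwich, ← hK, ← hKinv, MM.charpoly_conj]
end

section
/- Let d_A, d_B ≥ 1, let u : Fin d_A → (Fin d_A → ℂ) and v : Fin d_B → (Fin d_B → ℂ) be orthonormal bases of ℂ^{d_A} and ℂ^{d_B} respectively, let e : Fin d_A → Fin d_B → ℝ be nonnegative reals with Σ_{m,n} e m n = 1, and let ρ be the density matrix indexed by (Fin d_A × Fin d_B) given by ρ((i,k),(j,l)) = Σ_{m,n} (e m n) · (u m i) · conj(u m j) · (v n k) · conj(v n l) (i.e. ρ = Σ_{m,n} e_{mn} |u_m⟩⟨u_m| ⊗ |v_n⟩⟨v_n| has a product eigenbasis). Then the partial transpose (I⊗T)(ρ), defined by ((I⊗T)M)((i,k),(j,l)) = M((i,l),(j,k)), has the same characteristic polynomial as ρ. -/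
open Matrix Polynomial

/-- Conjugation by a matrix with two-sided inverse preserves the charpoly. -/
lemma charpoly_conj_aux {n : Type*} [Fintype n] [DecidableEq n] {R : Type*} [CommRing R]
    (A B M : Matrix n n R) (hAB : A * B = 1) (hBA : B * A = 1) :
    (B * M * A).charpoly = M.charpoly := by
  have hA' : (C : R →+* R[X]).mapMatrix A * (C : R →+* R[X]).mapMatrix B = 1 := by
    rw [← _root_.map_mul, hAB, _root_.map_one]
  have hB' : (C : R →+* R[X]).mapMatrix B * (C : R →+* R[X]).mapMatrix A = 1 := by
    rw [← _root_.map_mul, hBA, _root_.map_one]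
  set A' := (C : R →+* R[X]).mapMatrix A
  set B' := (C : R →+* R[X]).mapMatrix B
  have hcm : charmatrix (B * M * A) = B' * charmatrix M * A' := by
    unfold charmatrix
    rw [mul_sub, sub_mul]
    congr 1
    · have := (Matrix.scalar_commute (X : R[X]) (fun r => Commute.all _ _) A').symm
      calc Matrix.scalar n (X : R[X])
          = B' * A' * Matrix.scalar n (X : R[X]) := by rw [hB', one_mul]
        _ = B' * (A' * Matrix.scalar n (X : R[X])) := by rw [mul_assoc]
        _ = B' * (Matrix.scalar n (X : R[X]) * A') := by rw [← this]
        _ = B' * Matrix.scalar n (X : R[X]) * A' := by rw [mul_assoc]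
    · simp [A', B', _root_.map_mul, mul_assoc]
  unfold Matrix.charpoly
  rw [hcm, det_mul, det_mul]
  have : B'.det * A'.det = 1 := by
    have := congrArg det hB'
    rwa [det_mul, det_one] at this
  ring_nf
  calc B'.det * M.charmatrix.det * A'.det
      = B'.det * A'.det * M.charmatrix.det := by ring
    _ = M.charmatrix.det := by rw [this, one_mul]

/-- If the rows of `A` are orthonormal (`A * Aᴴ = 1`) then
`Aᴴ * diagonal f * A` has the charpoly of `diagonal f`. -/
lemma charpoly_unitary_conj {n : Type*} [Fintype n] [DecidableEq n]
    (A : Matrix n n ℂ) (hA : A * Aᴴ = 1) (D : Matrix n n ℂ) :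
    (Aᴴ * D * A).charpoly = D.charpoly :=
  charpoly_conj_aux A Aᴴ D hA (mul_eq_one_comm.mp hA)

/-- **Partial transposition preserves the eigenvalues of any state with a
product eigenbasis.** If `{u_m}` and `{v_n}` are orthonormal bases of `ℂ^{d_A}`
and `ℂ^{d_B}`, `e_{mn} ≥ 0` sum to `1`, and
`ρ = Σ_{mn} e_{mn} |u_m⟩⟨u_m| ⊗ |v_n⟩⟨v_n|`, then the partial transpose of `ρ`
has the same characteristic polynomial as `ρ`. -/
theorem stmt_13 (dA dB : ℕ) (hA : 1 ≤ dA) (hB : 1 ≤ dB)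
    (u : Fin dA → (Fin dA → ℂ)) (v : Fin dB → (Fin dB → ℂ))
    (hu : ∀ m m' : Fin dA,
      (∑ i : Fin dA, star (u m i) * u m' i) = if m = m' then 1 else 0)
    (hv : ∀ n n' : Fin dB,
      (∑ k : Fin dB, star (v n k) * v n' k) = if n = n' then 1 else 0)
    (e : Fin dA → Fin dB → ℝ)
    (he : ∀ m n, 0 ≤ e m n)
    (hsum : (∑ m : Fin dA, ∑ n : Fin dB, e m n) = 1)
    (ρ : Matrix (Fin dA × Fin dB) (Fin dA × Fin dB) ℂ)
    (hρ : ρ = Matrix.of fun p q =>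
      ∑ m : Fin dA, ∑ n : Fin dB,
        (e m n : ℂ) * u m p.1 * star (u m q.1) * v n p.2 * star (v n q.2)) :
    (partialTranspose dA dB ρ).charpoly = ρ.charpoly := by
  classical
  set D : Matrix (Fin dA × Fin dB) (Fin dA × Fin dB) ℂ :=
    Matrix.diagonal (fun p => (e p.1 p.2 : ℂ)) with hD
  -- A for ρ, B for the partial transpose
  set A : Matrix (Fin dA × Fin dB) (Fin dA × Fin dB) ℂ :=
    Matrix.of (fun r s => star (u r.1 s.1) * star (v r.2 s.2)) with hAdef
  set B : Matrix (Fin dA × Fin dB) (Fin dA × Fin dB) ℂ :=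
    Matrix.of (fun r s => star (u r.1 s.1) * v r.2 s.2) with hBdef
  have hAU : A * Aᴴ = 1 := by
    ext ⟨m, n⟩ ⟨m', n'⟩
    simp only [Matrix.mul_apply, Matrix.conjTranspose_apply, hAdef, Matrix.of_apply,
      Matrix.one_apply, Fintype.sum_prod_type]
    have : (∑ i, ∑ k, star (u (m, n).1 (i, k).1) * star (v (m, n).2 (i, k).2) *
        star (star (u (m', n').1 (i, k).1) * star (v (m', n').2 (i, k).2)))
        = (∑ i, star (u m i) * u m' i) * (∑ k, star (v n k) * v n' k) := by
      rw [Finset.sum_mul_sum]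
      refine Finset.sum_congr rfl fun i _ => Finset.sum_congr rfl fun k _ => ?_
      simp only [star_mul', star_star]
      ring
    rw [this, hu, hv]
    by_cases h1 : m = m' <;> by_cases h2 : n = n' <;>
      simp [h1, h2, Prod.ext_iff]
  have hBU : B * Bᴴ = 1 := by
    ext ⟨m, n⟩ ⟨m', n'⟩
    simp only [Matrix.mul_apply, Matrix.conjTranspose_apply, hBdef, Matrix.of_apply,
      Matrix.one_apply, Fintype.sum_prod_type]
    have : (∑ i, ∑ k, star (u (m, n).1 (i, k).1) * v (m, n).2 (i, k).2 *
        star (star (u (m', n').1 (i, k).1) * v (m', n').2 (i, k).2))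
        = (∑ i, star (u m i) * u m' i) * (∑ k, star (v n' k) * v n k) := by
      rw [Finset.sum_mul_sum]
      refine Finset.sum_congr rfl fun i _ => Finset.sum_congr rfl fun k _ => ?_
      simp only [star_mul', star_star]
      ring
    rw [this, hu, hv]
    by_cases h1 : m = m' <;> by_cases h2 : n = n' <;>
      simp [h1, h2, Prod.ext_iff, eq_comm]
  have hρA : ρ = Aᴴ * D * A := by
    ext p q
    rw [hρ, Matrix.mul_assoc, Matrix.mul_apply]
    simp only [Matrix.conjTranspose_apply, hAdef, hD, Matrix.of_apply,
      Matrix.diagonal_mul, Fintype.sum_prod_type]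
    refine Finset.sum_congr rfl fun m _ => Finset.sum_congr rfl fun n _ => ?_
    simp only [star_mul', star_star]
    ring
  have hPTB : partialTranspose dA dB ρ = Bᴴ * D * B := by
    ext p q
    rw [show partialTranspose dA dB ρ p q = ρ (p.1, q.2) (q.1, p.2) from rfl, hρ,
      Matrix.mul_assoc, Matrix.mul_apply]
    simp only [Matrix.conjTranspose_apply, hBdef, hD, Matrix.of_apply,
      Matrix.diagonal_mul, Fintype.sum_prod_type]
    refine Finset.sum_congr rfl fun m _ => Finset.sum_congr rfl fun n _ => ?_
    simp only [star_mul', star_star]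
    ring
  rw [hPTB, hρA, charpoly_unitary_conj A hAU D, charpoly_unitary_conj B hBU D]
end
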